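/- arXiv:1410.8625 — 10 statements merged into one kernel-verified Lean document; each statement's English description precedes it below -/
import Mathlib

section
/- Suppose the x-stationarity condition together with the dual update holds at steps k−1 and k (k ≥ 1). Then ‖p^{k+1} − p^k‖² ≤ (2(ℓ_f + ℓ_φ)²/μ₀)·‖x^{k+1} − x^k‖² + (2ℓ_φ²/μ₀)·‖x^k − x^{k−1}‖². -/
open scoped InnerProductSpace

theorem badmm_dual_bound_sq {n₁ n₂ m : ℕ} (hn₁ : 0 < n₁) (hn₂ : 0 < n₂) (hm : 0 < m)
    (A : EuclideanSpace ℝ (Fin n₁) →L[ℝ] EuclideanSpace ℝ (Fin m))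
    (B : EuclideanSpace ℝ (Fin n₂) →L[ℝ] EuclideanSpace ℝ (Fin m))
    (f φ : EuclideanSpace ℝ (Fin n₁) → ℝ)
    (f' φ' : EuclideanSpace ℝ (Fin n₁) → EuclideanSpace ℝ (Fin n₁))
    (hf : ∀ u, HasGradientAt f (f' u) u) (hφ : ∀ u, HasGradientAt φ (φ' u) u)
    (ℓf ℓφ : ℝ) (hℓf : 0 ≤ ℓf) (hℓφ : 0 ≤ ℓφ)
    (hf' : ∀ u v, ‖f' u - f' v‖ ≤ ℓf * ‖u - v‖)
    (hφ' : ∀ u v, ‖φ' u - φ' v‖ ≤ ℓφ * ‖u - v‖)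
    (α μ₀ : ℝ) (hα : 0 < α) (hμ₀ : 0 < μ₀)
    (hA : ∀ q : EuclideanSpace ℝ (Fin m),
      μ₀ * ‖q‖ ^ 2 ≤ ‖ContinuousLinearMap.adjoint A q‖ ^ 2)
    (x : ℕ → EuclideanSpace ℝ (Fin n₁)) (y : ℕ → EuclideanSpace ℝ (Fin n₂))
    (p : ℕ → EuclideanSpace ℝ (Fin m)) (k : ℕ) (hk : 1 ≤ k)
    (hstat : ∀ j, (j = k - 1 ∨ j = k) →
      f' (x (j + 1)) + ContinuousLinearMap.adjoint A (p j)
        + α • ContinuousLinearMap.adjoint A (A (x (j + 1)) - B (y (j + 1)))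
        + φ' (x (j + 1)) - φ' (x j) = 0)
    (hdual : ∀ j, (j = k - 1 ∨ j = k) →
      p (j + 1) = p j + α • (A (x (j + 1)) - B (y (j + 1)))) :
    ‖p (k + 1) - p k‖ ^ 2 ≤
      2 * (ℓf + ℓφ) ^ 2 / μ₀ * ‖x (k + 1) - x k‖ ^ 2
        + 2 * ℓφ ^ 2 / μ₀ * ‖x k - x (k - 1)‖ ^ 2 := by

  set T := ContinuousLinearMap.adjoint A with hT
  have key : ∀ j, (j = k - 1 ∨ j = k) →
      T (p (j + 1)) = φ' (x j) - f' (x (j + 1)) - φ' (x (j + 1)) := by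
    intro j hj
    have h1 := hstat j hj
    rw [hdual j hj, map_add, map_smul]
    calc T (p j) + α • T (A (x (j + 1)) - B (y (j + 1)))
        = (f' (x (j + 1)) + T (p j) + α • T (A (x (j + 1)) - B (y (j + 1)))
            + φ' (x (j + 1)) - φ' (x j))
          + (φ' (x j) - f' (x (j + 1)) - φ' (x (j + 1))) := by abel
      _ = φ' (x j) - f' (x (j + 1)) - φ' (x (j + 1)) := by rw [h1, zero_add]
  have e1 := key k (Or.inr rfl)
  have e2 := key (k - 1) (Or.inl rfl)
  have hk1 : k - 1 + 1 = k := Nat.succ_pred_eq_of_pos hk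
  rw [hk1] at e2
  set a := ‖x (k + 1) - x k‖ with ha
  set b := ‖x k - x (k - 1)‖ with hb
  have hnorm : ‖T (p (k + 1) - p k)‖ ≤ (ℓf + ℓφ) * a + ℓφ * b := by
    have hrw : T (p (k + 1) - p k)
        = (f' (x k) - f' (x (k + 1))) + (φ' (x k) - φ' (x (k + 1)))
          - (φ' (x (k - 1)) - φ' (x k)) := by
      rw [map_sub, e1, e2]; abel
    rw [hrw]
    have t1 : ‖f' (x k) - f' (x (k + 1))‖ ≤ ℓf * a := by
      calc ‖f' (x k) - f' (x (k + 1))‖ ≤ ℓf * ‖x k - x (k + 1)‖ := hf' _ _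
        _ = ℓf * a := by rw [norm_sub_rev, ha]
    have t2 : ‖φ' (x k) - φ' (x (k + 1))‖ ≤ ℓφ * a := by
      calc ‖φ' (x k) - φ' (x (k + 1))‖ ≤ ℓφ * ‖x k - x (k + 1)‖ := hφ' _ _
        _ = ℓφ * a := by rw [norm_sub_rev, ha]
    have t3 : ‖φ' (x (k - 1)) - φ' (x k)‖ ≤ ℓφ * b := by
      calc ‖φ' (x (k - 1)) - φ' (x k)‖ ≤ ℓφ * ‖x (k - 1) - x k‖ := hφ' _ _
        _ = ℓφ * b := by rw [norm_sub_rev, hb]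
    calc ‖(f' (x k) - f' (x (k + 1))) + (φ' (x k) - φ' (x (k + 1)))
            - (φ' (x (k - 1)) - φ' (x k))‖
        ≤ ‖(f' (x k) - f' (x (k + 1))) + (φ' (x k) - φ' (x (k + 1)))‖
            + ‖φ' (x (k - 1)) - φ' (x k)‖ := norm_sub_le _ _
      _ ≤ (‖f' (x k) - f' (x (k + 1))‖ + ‖φ' (x k) - φ' (x (k + 1))‖)
            + ‖φ' (x (k - 1)) - φ' (x k)‖ := by
          gcongr; exact norm_add_le _ _
      _ ≤ (ℓf + ℓφ) * a + ℓφ * b := by linarith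
  have ha0 : (0:ℝ) ≤ a := norm_nonneg _
  have hb0 : (0:ℝ) ≤ b := norm_nonneg _
  have hc0 : (0:ℝ) ≤ (ℓf + ℓφ) * a + ℓφ * b := by positivity
  have hsq : ‖T (p (k + 1) - p k)‖ ^ 2 ≤ ((ℓf + ℓφ) * a + ℓφ * b) ^ 2 :=
    pow_le_pow_left₀ (norm_nonneg _) hnorm 2
  have hfin : μ₀ * ‖p (k + 1) - p k‖ ^ 2
      ≤ 2 * (ℓf + ℓφ) ^ 2 * a ^ 2 + 2 * ℓφ ^ 2 * b ^ 2 := by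
    have h0 := hA (p (k + 1) - p k)
    nlinarith [sq_nonneg ((ℓf + ℓφ) * a - ℓφ * b)]
  rw [div_mul_eq_mul_div, div_mul_eq_mul_div, ← add_div,
    le_div_iff₀ hμ₀, mul_comm]
  exact hfin
end

section
/- Assume either x ↦ L_α(x, y^{k+1}, p^k) is μ₁-strongly convex or φ is μ₁-strongly convex, where μ₁ > 0 and φ is convex differentiable, and assume x^{k+1} is a global minimizer of x ↦ L_α(x, y^{k+1}, p^k) + Δ_φ(x, x^k) over ℝ^{n₁}. Then L_α(x^{k+1}, y^{k+1}, p^k) ≤ L_α(x^k, y^{k+1}, p^k) − (μ₁/2)‖x^{k+1} − x^k‖². -/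
open scoped InnerProductSpace
open Set Filter Topology

/-- Bregman lower bound from (strong) convexity of `h`. -/
lemma breg_lb_aux {n : ℕ} (h : EuclideanSpace ℝ (Fin n) → ℝ)
    (h' x y : EuclideanSpace ℝ (Fin n)) (μ : ℝ)
    (hc : ConvexOn ℝ Set.univ (fun z => h z - μ / 2 * ‖z‖ ^ 2))
    (hd : HasGradientAt h h' x) :
    h x + ⟪h', y - x⟫_ℝ + μ / 2 * ‖y - x‖ ^ 2 ≤ h y := by
  have hsc : StrongConvexOn Set.univ μ h := strongConvexOn_iff_convex.mpr hc
  set d := y - x with hdd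
  set g : ℝ → ℝ := fun t => h (x + t • d) with hg
  have hcurve : HasDerivAt (fun s : ℝ => x + s • d) d 0 := by
    simpa using ((hasDerivAt_id (0:ℝ)).smul_const d).const_add x
  have hgd : HasDerivAt g ⟪h', d⟫_ℝ 0 := by
    have hx0 : x + (0:ℝ) • d = x := by simp
    have := (hx0 ▸ hd.hasFDerivAt).comp_hasDerivAt 0 hcurve
    simp [InnerProductSpace.toDual_apply_apply] at this
    exact this
  have hslope : ∀ t ∈ Ioo (0:ℝ) 1,
      slope g 0 t ≤ (h y - h x) - (1 - t) * (μ / 2 * ‖d‖ ^ 2) := by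
    intro t ht
    have hz : x + t • d = (1 - t) • x + t • y := by
      simp [hdd, smul_sub, sub_smul]; abel
    have hineq := hsc.2 (mem_univ x) (mem_univ y) (by linarith [ht.2] : (0:ℝ) ≤ 1 - t)
      ht.1.le (by ring)
    rw [← hz] at hineq
    have hnorm : ‖x - y‖ = ‖d‖ := by rw [hdd, norm_sub_rev]
    rw [hnorm] at hineq
    have hg0 : g 0 = h x := by simp [hg]
    rw [slope_def_field, sub_zero, div_le_iff₀ ht.1]
    simp only [smul_eq_mul] at hineq
    have hgt : g t = h ((1 - t) • x + t • y) := by rw [hg]; exact congrArg h hz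
    rw [hg0, hgt]
    nlinarith [hineq]
  have hmem : Ioo (0:ℝ) 1 ∈ 𝓝[>] (0:ℝ) :=
    Ioo_mem_nhdsGT_of_mem ⟨le_refl 0, zero_lt_one⟩
  have h1 : Tendsto (slope g 0) (𝓝[>] (0:ℝ)) (𝓝 ⟪h', d⟫_ℝ) :=
    ((hasDerivAt_iff_tendsto_slope.mp hgd).mono_left
      (nhdsWithin_mono _ (fun t ht => ne_of_gt ht)))
  have h2 : Tendsto (fun t : ℝ => (h y - h x) - (1 - t) * (μ / 2 * ‖d‖ ^ 2))
      (𝓝[>] (0:ℝ)) (𝓝 ((h y - h x) - μ / 2 * ‖d‖ ^ 2)) := by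
    have hcont : Continuous fun t : ℝ => (h y - h x) - (1 - t) * (μ / 2 * ‖d‖ ^ 2) := by
      continuity
    have := (hcont.tendsto 0).mono_left (nhdsWithin_le_nhds (s := Ioi (0:ℝ)))
    simpa using this
  have hlim : ⟪h', d⟫_ℝ ≤ (h y - h x) - μ / 2 * ‖d‖ ^ 2 := by
    refine le_of_tendsto_of_tendsto h1 h2 ?_
    filter_upwards [hmem] with t ht using hslope t ht
  linarith

lemma limit_aux {a b C : ℝ} (hk : ∀ t ∈ Set.Ioo (0:ℝ) 1, a ≤ b - (1-t)*C) : a ≤ b - C := by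
  have hcont : Continuous fun t : ℝ => b - (1-t)*C := by continuity
  have h2 : Tendsto (fun t : ℝ => b - (1-t)*C) (𝓝[>] (0:ℝ)) (𝓝 (b - C)) := by
    have := (hcont.tendsto 0).mono_left (nhdsWithin_le_nhds (s := Ioi (0:ℝ)))
    simpa using this
  exact ge_of_tendsto h2 (by
    filter_upwards [Ioo_mem_nhdsGT_of_mem ⟨le_refl (0:ℝ), zero_lt_one⟩] with t ht
    exact hk t ht)

/-- The augmented Lagrangian `L_α(x,y,p)`. -/
noncomputable def augL {n₁ n₂ m : ℕ}
    (A : EuclideanSpace ℝ (Fin n₁) →L[ℝ] EuclideanSpace ℝ (Fin m))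
    (B : EuclideanSpace ℝ (Fin n₂) →L[ℝ] EuclideanSpace ℝ (Fin m))
    (f : EuclideanSpace ℝ (Fin n₁) → ℝ) (g : EuclideanSpace ℝ (Fin n₂) → ℝ)
    (α : ℝ) (x : EuclideanSpace ℝ (Fin n₁)) (y : EuclideanSpace ℝ (Fin n₂))
    (p : EuclideanSpace ℝ (Fin m)) : ℝ :=
  f x + g y + ⟪p, A x - B y⟫_ℝ + α / 2 * ‖A x - B y‖ ^ 2

/-- Bregman distance of a differentiable function `h` with gradient `h'`. -/
noncomputable def bregman {n : ℕ} (h : EuclideanSpace ℝ (Fin n) → ℝ)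
    (h' : EuclideanSpace ℝ (Fin n) → EuclideanSpace ℝ (Fin n))
    (u v : EuclideanSpace ℝ (Fin n)) : ℝ :=
  h u - h v - ⟪h' v, u - v⟫_ℝ

theorem badmm_x_descent {n₁ n₂ m : ℕ} (hn₁ : 0 < n₁) (hn₂ : 0 < n₂) (hm : 0 < m)
    (A : EuclideanSpace ℝ (Fin n₁) →L[ℝ] EuclideanSpace ℝ (Fin m))
    (B : EuclideanSpace ℝ (Fin n₂) →L[ℝ] EuclideanSpace ℝ (Fin m))
    (f : EuclideanSpace ℝ (Fin n₁) → ℝ) (g : EuclideanSpace ℝ (Fin n₂) → ℝ)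
    (hf : Differentiable ℝ f) (α : ℝ) (hα : 0 < α)
    (φ : EuclideanSpace ℝ (Fin n₁) → ℝ)
    (φ' : EuclideanSpace ℝ (Fin n₁) → EuclideanSpace ℝ (Fin n₁))
    (hφconv : ConvexOn ℝ Set.univ φ)
    (hφdiff : ∀ u, HasGradientAt φ (φ' u) u)
    (μ₁ : ℝ) (hμ₁ : 0 < μ₁)
    (xk x1 : EuclideanSpace ℝ (Fin n₁)) (y1 : EuclideanSpace ℝ (Fin n₂))
    (pk : EuclideanSpace ℝ (Fin m))
    (hsc : ConvexOn ℝ Set.univ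
          (fun x => augL A B f g α x y1 pk - μ₁ / 2 * ‖x‖ ^ 2) ∨
        ConvexOn ℝ Set.univ (fun x => φ x - μ₁ / 2 * ‖x‖ ^ 2))
    (hmin : ∀ x : EuclideanSpace ℝ (Fin n₁),
      augL A B f g α x1 y1 pk + bregman φ φ' x1 xk ≤
        augL A B f g α x y1 pk + bregman φ φ' x xk) :
    augL A B f g α x1 y1 pk ≤
      augL A B f g α xk y1 pk - μ₁ / 2 * ‖x1 - xk‖ ^ 2 := by
  have hDxk : bregman φ φ' xk xk = 0 := by simp [bregman]
  have hD1 : 0 ≤ bregman φ φ' x1 xk := by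
    have := breg_lb_aux φ (φ' xk) xk x1 0
      (by simpa using hφconv) (hφdiff xk)
    simp only [bregman]
    linarith [this]
  rcases hsc with hsc1 | hsc2
  · -- L strongly convex
    have hDconv : ConvexOn ℝ Set.univ (fun x => bregman φ φ' x xk) := by
      refine ⟨convex_univ, fun x _ y _ a b ha hb hab => ?_⟩
      have hφ := hφconv.2 (Set.mem_univ x) (Set.mem_univ y) ha hb hab
      obtain rfl : b = 1 - a := by linarith
      simp only [bregman, inner_sub_right, inner_add_right, real_inner_smul_right,
        smul_eq_mul] at hφ ⊢
      nlinarith [hφ]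
    have heq : (fun x => (augL A B f g α x y1 pk + bregman φ φ' x xk)
          - μ₁ / 2 * ‖x‖ ^ 2)
        = fun x => (augL A B f g α x y1 pk - μ₁ / 2 * ‖x‖ ^ 2)
          + bregman φ φ' x xk := by
      funext z; ring
    have hSC : StrongConvexOn Set.univ μ₁
        (fun x => augL A B f g α x y1 pk + bregman φ φ' x xk) :=
      strongConvexOn_iff_convex.mpr (heq ▸ hsc1.add hDconv)
    have key : ∀ t ∈ Set.Ioo (0:ℝ) 1,
        augL A B f g α x1 y1 pk + bregman φ φ' x1 xk ≤
          (augL A B f g α xk y1 pk + bregman φ φ' xk xk)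
            - (1 - t) * (μ₁ / 2 * ‖x1 - xk‖ ^ 2) := by
      intro t ht
      have hstrong := hSC.2 (Set.mem_univ x1) (Set.mem_univ xk)
        (by linarith [ht.2] : (0:ℝ) ≤ 1 - t) ht.1.le (by ring)
      have hmin' := hmin ((1 - t) • x1 + t • xk)
      simp only [smul_eq_mul] at hstrong
      nlinarith [hstrong, hmin', ht.1, ht.2]
    have := limit_aux key
    linarith
  · -- φ strongly convex
    have hb := breg_lb_aux φ (φ' xk) xk x1 μ₁ hsc2 (hφdiff xk)
    have hm := hmin xk
    simp only [bregman, sub_self, inner_zero_right] at hm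
    linarith [hm, hb]
end

section
/- Let (x^k), (y^k), (p^k) be BADMM iterates, where φ and ψ are convex differentiable and either x ↦ L_α(x, y, p) is μ₁-strongly convex for every (y, p) or φ is μ₁-strongly convex, with μ₁ > 0. Then for every k, L_α(x^{k+1}, y^{k+1}, p^{k+1}) − L_α(x^k, y^k, p^k) ≤ −(μ₁/2)‖x^{k+1} − x^k‖² + (1/α)‖p^{k+1} − p^k‖². -/
open scoped InnerProductSpace
open Filter Set Topology

/-- Gradient inequality for a (strongly) convex function. -/
lemma grad_ineq_strong {n : ℕ} {g : EuclideanSpace ℝ (Fin n) → ℝ}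
    {g' v : EuclideanSpace ℝ (Fin n)} {c : ℝ}
    (hconv : ConvexOn ℝ Set.univ (fun z => g z - c * ‖z‖ ^ 2))
    (hg : HasGradientAt g g' v) (u : EuclideanSpace ℝ (Fin n)) :
    g v + ⟪g', u - v⟫_ℝ + c * ‖u - v‖ ^ 2 ≤ g u := by
  set w := u - v with hw
  have huv : u = v + w := by simp [hw]
  set q : ℝ → ℝ := fun t => g (v + t • w) with hq
  -- derivative of q at 0
  have hline : HasDerivAt (fun t : ℝ => v + t • w) w 0 := by
    simpa using ((hasDerivAt_id (0:ℝ)).smul_const w).const_add v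
  have hq0 : HasDerivAt q (⟪g', w⟫_ℝ) 0 := by
    have hf : HasFDerivAt g ((InnerProductSpace.toDual ℝ _) g') ((fun t : ℝ => v + t • w) 0) := by
      simpa using hg.hasFDerivAt
    exact hf.comp_hasDerivAt 0 hline
  have htend : Tendsto (slope q 0) (𝓝[>] 0) (𝓝 (⟪g', w⟫_ℝ)) :=
    (hasDerivAt_iff_tendsto_slope.mp hq0).mono_left
      (nhdsWithin_mono 0 (fun t ht => by simpa using ne_of_gt ht))
  have hnorm1 : ∀ t : ℝ, ‖v + t • w‖ ^ 2 = ‖v‖ ^ 2 + 2 * t * ⟪v, w⟫_ℝ + t ^ 2 * ‖w‖ ^ 2 := by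
    intro t
    rw [norm_add_sq_real, real_inner_smul_right, norm_smul]
    simp only [Real.norm_eq_abs, mul_pow, sq_abs]
    ring
  have hkey : ∀ t : ℝ, t ∈ Set.Ioo (0:ℝ) 1 →
      slope q 0 t ≤ g u - g v - c * (1 - t) * ‖w‖ ^ 2 := by
    rintro t ⟨ht0, ht1⟩
    have hcvx := hconv.2 (Set.mem_univ v) (Set.mem_univ u)
      (by linarith : (0:ℝ) ≤ 1 - t) (le_of_lt ht0) (by ring)
    simp only at hcvx
    have hpt : (1 - t) • v + t • u = v + t • w := by
      rw [huv]; module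
    rw [hpt] at hcvx
    have h1 := hnorm1 t
    have h2 : ‖u‖ ^ 2 = ‖v‖ ^ 2 + 2 * ⟪v, w⟫_ℝ + ‖w‖ ^ 2 := by
      rw [huv, norm_add_sq_real]
    have hslope : slope q 0 t = (q t - q 0) / t := by
      rw [slope_def_field]; ring_nf
    rw [hslope, div_le_iff₀ ht0]
    have hqt : q t = g (v + t • w) := rfl
    have hq00 : q 0 = g v := by simp [hq]
    simp only [smul_eq_mul] at hcvx
    rw [h1, h2] at hcvx
    rw [hqt, hq00]
    nlinarith [hcvx]
  have hrhs : Tendsto (fun t : ℝ => g u - g v - c * (1 - t) * ‖w‖ ^ 2) (𝓝[>] 0)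
      (𝓝 (g u - g v - c * ‖w‖ ^ 2)) := by
    have hcont : Continuous fun t : ℝ => g u - g v - c * (1 - t) * ‖w‖ ^ 2 := by fun_prop
    have := (hcont.tendsto 0).mono_left (nhdsWithin_le_nhds (s := Set.Ioi (0:ℝ)))
    simpa using this
  have hev : slope q 0 ≤ᶠ[𝓝[>] (0:ℝ)] fun t => g u - g v - c * (1 - t) * ‖w‖ ^ 2 := by
    filter_upwards [Ioo_mem_nhdsGT_of_mem (Set.left_mem_Ico.mpr one_pos)] with t ht
    exact hkey t ht
  have hle : (⟪g', w⟫_ℝ) ≤ g u - g v - c * ‖w‖ ^ 2 :=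
    le_of_tendsto_of_tendsto htend hrhs hev
  linarith

/-- Quadratic growth at a global minimizer of a strongly convex function. -/
lemma strong_min {n : ℕ} {F : EuclideanSpace ℝ (Fin n) → ℝ} {c : ℝ} (hc : 0 < c)
    (hG : ConvexOn ℝ Set.univ (fun z => F z - c * ‖z‖ ^ 2))
    {xs : EuclideanSpace ℝ (Fin n)} (hmin : ∀ z, F xs ≤ F z)
    (z : EuclideanSpace ℝ (Fin n)) : F xs + c * ‖z - xs‖ ^ 2 ≤ F z := by
  have hkey : ∀ t : ℝ, t ∈ Set.Ioo (0:ℝ) 1 →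
      c * (1 - t) * ‖z - xs‖ ^ 2 ≤ F z - F xs := by
    rintro t ⟨ht0, ht1⟩
    have hcvx := hG.2 (Set.mem_univ z) (Set.mem_univ xs)
      (le_of_lt ht0) (by linarith : (0:ℝ) ≤ 1 - t) (by ring)
    simp only [smul_eq_mul] at hcvx
    have hmin' := hmin (t • z + (1 - t) • xs)
    have h1 : ‖t • z + (1 - t) • xs‖ ^ 2 =
        t ^ 2 * ‖z‖ ^ 2 + 2 * (t * (1 - t)) * ⟪z, xs⟫_ℝ + (1 - t) ^ 2 * ‖xs‖ ^ 2 := by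
      rw [norm_add_sq_real, real_inner_smul_left, real_inner_smul_right, norm_smul, norm_smul]
      simp only [Real.norm_eq_abs, mul_pow, sq_abs]
      ring
    have h2 : ‖z - xs‖ ^ 2 = ‖z‖ ^ 2 - 2 * ⟪z, xs⟫_ℝ + ‖xs‖ ^ 2 := norm_sub_sq_real z xs
    rw [h1] at hcvx
    rw [h2]
    nlinarith [hcvx, hmin']
  have hrhs : Tendsto (fun t : ℝ => c * (1 - t) * ‖z - xs‖ ^ 2) (𝓝[>] 0)
      (𝓝 (c * ‖z - xs‖ ^ 2)) := by
    have hcont : Continuous fun t : ℝ => c * (1 - t) * ‖z - xs‖ ^ 2 := by fun_prop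
    have := (hcont.tendsto 0).mono_left (nhdsWithin_le_nhds (s := Set.Ioi (0:ℝ)))
    simpa using this
  have hle : c * ‖z - xs‖ ^ 2 ≤ F z - F xs := by
    refine le_of_tendsto hrhs ?_
    filter_upwards [Ioo_mem_nhdsGT_of_mem (Set.left_mem_Ico.mpr one_pos)] with t ht
    exact hkey t ht
  linarith

/-- An affine function `z ↦ ⟪w, z⟫ + a` is convex. -/
lemma affine_convexOn {n : ℕ} (w : EuclideanSpace ℝ (Fin n)) (a : ℝ) :
    ConvexOn ℝ Set.univ (fun z => ⟪w, z⟫_ℝ + a) := by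
  refine ⟨convex_univ, fun x _ y _ s t hs ht hst => ?_⟩
  simp only [inner_add_right, real_inner_smul_right, smul_eq_mul]
  have h : s * a + t * a = a := by rw [← add_mul, hst, one_mul]
  linarith
theorem badmm_lagrangian_descent {n₁ n₂ m : ℕ} (hn₁ : 0 < n₁) (hn₂ : 0 < n₂) (hm : 0 < m)
    (A : EuclideanSpace ℝ (Fin n₁) →L[ℝ] EuclideanSpace ℝ (Fin m))
    (B : EuclideanSpace ℝ (Fin n₂) →L[ℝ] EuclideanSpace ℝ (Fin m))
    (f : EuclideanSpace ℝ (Fin n₁) → ℝ) (g : EuclideanSpace ℝ (Fin n₂) → ℝ)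
    (hf : Differentiable ℝ f) (α : ℝ) (hα : 0 < α)
    (φ : EuclideanSpace ℝ (Fin n₁) → ℝ)
    (φ' : EuclideanSpace ℝ (Fin n₁) → EuclideanSpace ℝ (Fin n₁))
    (hφconv : ConvexOn ℝ Set.univ φ)
    (hφdiff : ∀ u, HasGradientAt φ (φ' u) u)
    (ψ : EuclideanSpace ℝ (Fin n₂) → ℝ)
    (ψ' : EuclideanSpace ℝ (Fin n₂) → EuclideanSpace ℝ (Fin n₂))
    (hψconv : ConvexOn ℝ Set.univ ψ)
    (hψdiff : ∀ u, HasGradientAt ψ (ψ' u) u)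
    (μ₁ : ℝ) (hμ₁ : 0 < μ₁)
    (hsc : (∀ (y : EuclideanSpace ℝ (Fin n₂)) (p : EuclideanSpace ℝ (Fin m)),
          ConvexOn ℝ Set.univ (fun x => augL A B f g α x y p - μ₁ / 2 * ‖x‖ ^ 2)) ∨
        ConvexOn ℝ Set.univ (fun x => φ x - μ₁ / 2 * ‖x‖ ^ 2))
    (x : ℕ → EuclideanSpace ℝ (Fin n₁)) (y : ℕ → EuclideanSpace ℝ (Fin n₂))
    (p : ℕ → EuclideanSpace ℝ (Fin m))
    (hy : ∀ k, ∀ y' : EuclideanSpace ℝ (Fin n₂),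
      augL A B f g α (x k) (y (k + 1)) (p k) + bregman ψ ψ' (y (k + 1)) (y k) ≤
        augL A B f g α (x k) y' (p k) + bregman ψ ψ' y' (y k))
    (hx : ∀ k, ∀ x' : EuclideanSpace ℝ (Fin n₁),
      augL A B f g α (x (k + 1)) (y (k + 1)) (p k) + bregman φ φ' (x (k + 1)) (x k) ≤
        augL A B f g α x' (y (k + 1)) (p k) + bregman φ φ' x' (x k))
    (hp : ∀ k, p (k + 1) = p k + α • (A (x (k + 1)) - B (y (k + 1)))) :
    ∀ k : ℕ,
      augL A B f g α (x (k + 1)) (y (k + 1)) (p (k + 1))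
          - augL A B f g α (x k) (y k) (p k) ≤
        -(μ₁ / 2) * ‖x (k + 1) - x k‖ ^ 2 + 1 / α * ‖p (k + 1) - p k‖ ^ 2 := by
  intro k
  have hψ0 : ∀ u v, 0 ≤ bregman ψ ψ' u v := by
    intro u v
    have h := grad_ineq_strong (c := 0) (by simpa using hψconv) (hψdiff v) u
    simp only [bregman]
    linarith
  have hφ0 : ∀ u v, 0 ≤ bregman φ φ' u v := by
    intro u v
    have h := grad_ineq_strong (c := 0) (by simpa using hφconv) (hφdiff v) u
    simp only [bregman]
    linarith
  -- y-step descent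
  have hystep : augL A B f g α (x k) (y (k + 1)) (p k) ≤ augL A B f g α (x k) (y k) (p k) := by
    have h := hy k (y k)
    have h0 : bregman ψ ψ' (y k) (y k) = 0 := by simp [bregman]
    have h1 := hψ0 (y (k + 1)) (y k)
    linarith
  -- x-step descent with strong convexity
  have hxstep : augL A B f g α (x (k + 1)) (y (k + 1)) (p k)
      + μ₁ / 2 * ‖x (k + 1) - x k‖ ^ 2 ≤ augL A B f g α (x k) (y (k + 1)) (p k) := by
    rcases hsc with hA | hB
    · set F : EuclideanSpace ℝ (Fin n₁) → ℝ :=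
        fun z => augL A B f g α z (y (k + 1)) (p k) + bregman φ φ' z (x k) with hF
      have hbreg : ConvexOn ℝ Set.univ (fun z => bregman φ φ' z (x k)) := by
        have heq : (fun z => bregman φ φ' z (x k)) =
            fun z => φ z + (⟪-(φ' (x k)), z⟫_ℝ + (⟪φ' (x k), x k⟫_ℝ - φ (x k))) := by
          funext z
          simp [bregman, inner_sub_right, inner_neg_left]
          ring
        rw [heq]
        exact hφconv.add (affine_convexOn _ _)
      have hG : ConvexOn ℝ Set.univ (fun z => F z - μ₁ / 2 * ‖z‖ ^ 2) := by
        have heq : (fun z => F z - μ₁ / 2 * ‖z‖ ^ 2) =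
            fun z => (augL A B f g α z (y (k + 1)) (p k) - μ₁ / 2 * ‖z‖ ^ 2)
              + bregman φ φ' z (x k) := by
          funext z
          simp only [hF]
          ring
        rw [heq]
        exact (hA (y (k + 1)) (p k)).add hbreg
      have hmin : ∀ z, F (x (k + 1)) ≤ F z := fun z => hx k z
      have hsm := strong_min (by positivity : (0:ℝ) < μ₁ / 2) hG hmin (x k)
      have h0 : bregman φ φ' (x k) (x k) = 0 := by simp [bregman]
      have h1 := hφ0 (x (k + 1)) (x k)
      rw [norm_sub_rev] at hsm
      simp only [hF] at hsm
      linarith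
    · have h := hx k (x k)
      have h0 : bregman φ φ' (x k) (x k) = 0 := by simp [bregman]
      have h1 := grad_ineq_strong hB (hφdiff (x k)) (x (k + 1))
      simp only [bregman] at h h0
      linarith
  -- p-step ascent
  have hpstep : augL A B f g α (x (k + 1)) (y (k + 1)) (p (k + 1))
      - augL A B f g α (x (k + 1)) (y (k + 1)) (p k) = 1 / α * ‖p (k + 1) - p k‖ ^ 2 := by
    have hpk := hp k
    simp only [augL]
    set r := A (x (k + 1)) - B (y (k + 1)) with hr
    have hd : p (k + 1) - p k = α • r := by rw [hpk]; abel
    have hinner : ⟪p (k + 1), r⟫_ℝ - ⟪p k, r⟫_ℝ = α * ‖r‖ ^ 2 := by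
      rw [← inner_sub_left, hd, real_inner_smul_left, real_inner_self_eq_norm_sq]
    have hnorm : ‖p (k + 1) - p k‖ ^ 2 = α ^ 2 * ‖r‖ ^ 2 := by
      rw [hd, norm_smul]
      simp only [Real.norm_eq_abs, mul_pow, sq_abs]
    rw [hnorm]
    have hα' : α ≠ 0 := ne_of_gt hα
    have : (1:ℝ) / α * (α ^ 2 * ‖r‖ ^ 2) = α * ‖r‖ ^ 2 := by
      field_simp
    linarith
  linarith
end

section
/- (Lemma III.1) Let Assumption 1 hold (the injectivity of B is not needed here) and let (x^k), (y^k), (p^k) be BADMM iterates. Then there exist σ₀ > 0 and σ₁ > 0 such that, defining L̂(x, y, p, x̂) := L_α(x, y, p) + (σ₀/2)‖x − x̂‖², for every k ≥ 1: σ₁‖x^{k+1} − x^k‖² ≤ L̂(x^k, y^k, p^k, x^{k−1}) − L̂(x^{k+1}, y^{k+1}, p^{k+1}, x^k). -/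
open scoped InnerProductSpace

section Aux

variable {E : Type*} [NormedAddCommGroup E] [InnerProductSpace ℝ E] [CompleteSpace E]

lemma hasGradientAt_of_fderiv' {f : E → ℝ} {L : E →L[ℝ] ℝ} {g : E} {x : E}
    (h : HasFDerivAt f L x) (hL : ∀ d, L d = ⟪g, d⟫_ℝ) : HasGradientAt f g x := by
  rw [hasGradientAt_iff_hasFDerivAt]
  have hLe : (InnerProductSpace.toDual ℝ E) g = L := by
    ext d
    simp [hL d]
  rw [hLe]; exact h

lemma subgrad {h : E → ℝ} {g u v : E}
    (hc : ConvexOn ℝ Set.univ h) (hg : HasGradientAt h g v) :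
    ⟪g, u - v⟫_ℝ ≤ h u - h v := by
  set φ : ℝ → ℝ := fun t => h (v + t • (u - v)) with hφ
  have hline : HasDerivAt (fun t : ℝ => v + t • (u - v)) (u - v) 0 := by
    simpa using ((hasDerivAt_id (0:ℝ)).smul_const (u - v)).const_add v
  have hd : HasDerivAt φ ⟪g, u - v⟫_ℝ 0 := by
    have hg' : HasFDerivAt h ((InnerProductSpace.toDual ℝ E) g) (v + (0:ℝ) • (u - v)) := by
      simpa using hg.hasFDerivAt
    have := hg'.comp_hasDerivAt 0 hline
    simp at this; exact this
  have hslope := hasDerivAt_iff_tendsto_slope.mp hd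
  have hslope' : Filter.Tendsto (slope φ 0) (nhdsWithin 0 (Set.Ioi 0)) (nhds ⟪g, u - v⟫_ℝ) :=
    hslope.mono_left (nhdsWithin_mono _ (fun t ht => by simpa using ne_of_gt ht))
  refine le_of_tendsto hslope' ?_
  filter_upwards [Ioo_mem_nhdsGT_of_mem (by norm_num : (0:ℝ) ∈ Set.Ico 0 1)] with t ht
  obtain ⟨ht0, ht1⟩ := ht
  have hcv := hc.2 (Set.mem_univ v) (Set.mem_univ u) (by linarith : (0:ℝ) ≤ 1 - t)
    (le_of_lt ht0) (by ring)
  have heq : v + t • (u - v) = (1 - t) • v + t • u := by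
    rw [smul_sub]; module
  have : φ t ≤ (1 - t) * h v + t * h u := by rw [hφ]; simpa [heq] using hcv
  rw [slope_def_field, div_eq_inv_mul]
  have h2 : φ t - φ 0 ≤ t * (h u - h v) := by
    simp only [hφ, zero_smul, add_zero] at *; nlinarith
  calc (t - 0)⁻¹ * (φ t - φ 0) ≤ (t - 0)⁻¹ * (t * (h u - h v)) := by
        apply mul_le_mul_of_nonneg_left h2 (by simp; positivity)
    _ = h u - h v := by rw [sub_zero]; field_simp

lemma HasGradientAt.sub' {F G : E → ℝ} {gF gG : E} {u : E}
    (hF : HasGradientAt F gF u) (hG : HasGradientAt G gG u) :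
    HasGradientAt (fun x => F x - G x) (gF - gG) u :=
  hasGradientAt_of_fderiv' (hF.hasFDerivAt.sub hG.hasFDerivAt)
    (fun d => by simp [inner_sub_left])

lemma hasGradientAt_normSq (μ : ℝ) (u : E) :
    HasGradientAt (fun x : E => μ / 2 * ‖x‖ ^ 2) (μ • u) u := by
  have h3 := ((hasFDerivAt_id u).inner ℝ (hasFDerivAt_id u)).const_mul (μ/2)
  have h3' : HasFDerivAt (fun x : E => μ / 2 * ‖x‖ ^ 2)
      ((μ/2) • ((fderivInnerCLM ℝ (u, u)).comp
        ((ContinuousLinearMap.id ℝ E).prod (ContinuousLinearMap.id ℝ E)))) u := by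
    have hfun : (fun x : E => μ / 2 * ‖x‖ ^ 2) = fun y => μ / 2 * ⟪id y, id y⟫_ℝ := by
      funext x; simp only [id, real_inner_self_eq_norm_sq]
    rw [hfun]; exact h3
  refine hasGradientAt_of_fderiv' h3' ?_
  intro d
  simp only [ContinuousLinearMap.smul_apply, ContinuousLinearMap.coe_comp',
    Function.comp_apply, ContinuousLinearMap.prod_apply, fderivInnerCLM_apply,
    ContinuousLinearMap.coe_id', id_eq, smul_eq_mul, real_inner_smul_left]
  rw [real_inner_comm d u]
  ring

lemma convexOn_inner_const (w : E) (c : ℝ) :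
    ConvexOn ℝ Set.univ (fun x : E => c - ⟪w, x⟫_ℝ) := by
  refine ⟨convex_univ, fun a _ b _ s t hs ht hst => le_of_eq ?_⟩
  simp only [inner_add_right, real_inner_smul_right, smul_eq_mul]
  linear_combination (-c) * hst

end Aux

section Grad

lemma hasGradientAt_G {n₁ n₂ m : ℕ}
    (A : EuclideanSpace ℝ (Fin n₁) →L[ℝ] EuclideanSpace ℝ (Fin m))
    (B : EuclideanSpace ℝ (Fin n₂) →L[ℝ] EuclideanSpace ℝ (Fin m))
    (f : EuclideanSpace ℝ (Fin n₁) → ℝ) (g : EuclideanSpace ℝ (Fin n₂) → ℝ)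
    (α : ℝ) (f' φ' : EuclideanSpace ℝ (Fin n₁) → EuclideanSpace ℝ (Fin n₁))
    (φ : EuclideanSpace ℝ (Fin n₁) → ℝ)
    (hfgrad : ∀ u, HasGradientAt f (f' u) u) (hφdiff : ∀ u, HasGradientAt φ (φ' u) u)
    (y0 : EuclideanSpace ℝ (Fin n₂)) (p0 : EuclideanSpace ℝ (Fin m))
    (xk u : EuclideanSpace ℝ (Fin n₁)) :
    HasGradientAt (fun x => augL A B f g α x y0 p0 + bregman φ φ' x xk)
      (f' u + ContinuousLinearMap.adjoint A p0
        + α • ContinuousLinearMap.adjoint A (A u - B y0) + φ' u - φ' xk) u := by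
  have h1 := (hfgrad u).hasFDerivAt
  have hA : HasFDerivAt (fun x => A x - B y0) (A : _ →L[ℝ] _) u :=
    A.hasFDerivAt.sub_const _
  have h2 := (hasFDerivAt_const p0 u).inner ℝ hA
  have h3 := hA.inner ℝ hA
  have h3' := h3.const_mul (α/2)
  have h3'' : HasFDerivAt (fun x => α/2 * ‖A x - B y0‖^2)
      ((α/2) • ((fderivInnerCLM ℝ (A u - B y0, A u - B y0)).comp
        ((A : _ →L[ℝ] _).prod (A : _ →L[ℝ] _)))) u := by
    have hfun : (fun x => α/2 * ‖A x - B y0‖^2) = fun y => α / 2 * ⟪A y - B y0, A y - B y0⟫_ℝ := by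
      funext x; rw [real_inner_self_eq_norm_sq]
    rw [hfun]; exact h3'
  have h4 := (hasFDerivAt_const (φ' xk) u).inner ℝ ((hasFDerivAt_id u).sub_const xk)
  have h5 := (hφdiff u).hasFDerivAt
  have htot := ((((h1.add_const (g y0)).add h2).add h3'').add
    ((h5.sub_const (φ xk)).sub h4))
  refine hasGradientAt_of_fderiv' (by exact htot) ?_
  intro d
  simp only [ContinuousLinearMap.add_apply, ContinuousLinearMap.coe_comp',
    Function.comp_apply, ContinuousLinearMap.prod_apply, fderivInnerCLM_apply,
    ContinuousLinearMap.sub_apply, ContinuousLinearMap.smul_apply,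
    ContinuousLinearMap.zero_apply, ContinuousLinearMap.coe_id', id_eq,
    InnerProductSpace.toDual_apply_apply, inner_zero_left, smul_eq_mul]
  simp only [inner_sub_left, inner_add_left, real_inner_smul_left,
    ContinuousLinearMap.adjoint_inner_left, real_inner_comm (A d) (A u - B y0)]
  ring

end Grad

set_option maxHeartbeats 2000000 in
theorem badmm_lemma_III_1
{n₁ n₂ m : ℕ} (hn₁ : 0 < n₁) (hn₂ : 0 < n₂) (hm : 0 < m)
    (A : EuclideanSpace ℝ (Fin n₁) →L[ℝ] EuclideanSpace ℝ (Fin m))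
    (B : EuclideanSpace ℝ (Fin n₂) →L[ℝ] EuclideanSpace ℝ (Fin m))
    (f : EuclideanSpace ℝ (Fin n₁) → ℝ) (g : EuclideanSpace ℝ (Fin n₂) → ℝ)
    (f' : EuclideanSpace ℝ (Fin n₁) → EuclideanSpace ℝ (Fin n₁))
    (hfC1 : ContDiff ℝ 1 f) (hfgrad : ∀ u, HasGradientAt f (f' u) u)
    (ℓf : ℝ) (hℓf : 0 ≤ ℓf) (hf' : ∀ u v, ‖f' u - f' v‖ ≤ ℓf * ‖u - v‖)
    (hg : LowerSemicontinuous g)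
    (φ : EuclideanSpace ℝ (Fin n₁) → ℝ)
    (φ' : EuclideanSpace ℝ (Fin n₁) → EuclideanSpace ℝ (Fin n₁))
    (hφconv : ConvexOn ℝ Set.univ φ) (hφdiff : ∀ u, HasGradientAt φ (φ' u) u)
    (ℓφ : ℝ) (hℓφ : 0 ≤ ℓφ) (hφ' : ∀ u v, ‖φ' u - φ' v‖ ≤ ℓφ * ‖u - v‖)
    (ψ : EuclideanSpace ℝ (Fin n₂) → ℝ)
    (ψ' : EuclideanSpace ℝ (Fin n₂) → EuclideanSpace ℝ (Fin n₂))
    (hψconv : ConvexOn ℝ Set.univ ψ) (hψdiff : ∀ u, HasGradientAt ψ (ψ' u) u)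
    (ℓψ : ℝ) (hℓψ : 0 ≤ ℓψ) (hψ' : ∀ u v, ‖ψ' u - ψ' v‖ ≤ ℓψ * ‖u - v‖)
    (α μ₀ : ℝ) (hα : 0 < α) (hμ₀ : 0 < μ₀)
    (hA : ∀ q : EuclideanSpace ℝ (Fin m),
      μ₀ * ‖q‖ ^ 2 ≤ ‖ContinuousLinearMap.adjoint A q‖ ^ 2)
    (μ₁ : ℝ) (hμ₁ : 0 < μ₁)
    (hsc : (∀ (y : EuclideanSpace ℝ (Fin n₂)) (p : EuclideanSpace ℝ (Fin m)),
          ConvexOn ℝ Set.univ (fun x => augL A B f g α x y p - μ₁ / 2 * ‖x‖ ^ 2)) ∨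
        ConvexOn ℝ Set.univ (fun x => φ x - μ₁ / 2 * ‖x‖ ^ 2))
    (hαbig : α > 4 * ((ℓf + ℓφ) ^ 2 + ℓφ ^ 2) / (μ₁ * μ₀))
    (x : ℕ → EuclideanSpace ℝ (Fin n₁)) (y : ℕ → EuclideanSpace ℝ (Fin n₂))
    (p : ℕ → EuclideanSpace ℝ (Fin m))
    (hy : ∀ k, ∀ y' : EuclideanSpace ℝ (Fin n₂),
      augL A B f g α (x k) (y (k + 1)) (p k) + bregman ψ ψ' (y (k + 1)) (y k) ≤
        augL A B f g α (x k) y' (p k) + bregman ψ ψ' y' (y k))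
    (hx : ∀ k, ∀ x' : EuclideanSpace ℝ (Fin n₁),
      augL A B f g α (x (k + 1)) (y (k + 1)) (p k) + bregman φ φ' (x (k + 1)) (x k) ≤
        augL A B f g α x' (y (k + 1)) (p k) + bregman φ φ' x' (x k))
    (hp : ∀ k, p (k + 1) = p k + α • (A (x (k + 1)) - B (y (k + 1)))) :
    ∃ σ₀ > (0 : ℝ), ∃ σ₁ > (0 : ℝ), ∀ k : ℕ, 1 ≤ k →
      σ₁ * ‖x (k + 1) - x k‖ ^ 2 ≤
        (augL A B f g α (x k) (y k) (p k) + σ₀ / 2 * ‖x k - x (k - 1)‖ ^ 2)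
          - (augL A B f g α (x (k + 1)) (y (k + 1)) (p (k + 1))
              + σ₀ / 2 * ‖x (k + 1) - x k‖ ^ 2) := by
  set A' := ContinuousLinearMap.adjoint A with hA'
  -- gradient of the x-subproblem objective vanishes at the minimizer
  have hzero : ∀ k, f' (x (k+1)) + A' (p k)
      + α • A' (A (x (k+1)) - B (y (k+1))) + φ' (x (k+1)) - φ' (x k) = 0 := by
    intro k
    have hGgrad := hasGradientAt_G A B f g α f' φ' φ hfgrad hφdiff
      (y (k+1)) (p k) (x k) (x (k+1))
    have hmin : IsLocalMin (fun x' => augL A B f g α x' (y (k+1)) (p k)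
        + bregman φ φ' x' (x k)) (x (k+1)) :=
      Filter.Eventually.of_forall (fun x' => hx k x')
    have h0 := hmin.hasFDerivAt_eq_zero hGgrad.hasFDerivAt
    have h0' := congrArg (InnerProductSpace.toDual ℝ (EuclideanSpace ℝ (Fin n₁))).symm h0
    simpa [hA'] using h0'
  -- optimality rewritten with the new multiplier
  have keyGrad : ∀ k, A' (p (k+1)) = -(f' (x (k+1))) - φ' (x (k+1)) + φ' (x k) := by
    intro k
    have h1 : A' (p (k+1)) = A' (p k) + α • A' (A (x (k+1)) - B (y (k+1))) := by
      rw [hp k, map_add, map_smul]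
    have h2 := hzero k
    have h3 : A' (p k) + α • A' (A (x (k+1)) - B (y (k+1)))
        - (-(f' (x (k+1))) - φ' (x (k+1)) + φ' (x k))
        = f' (x (k+1)) + A' (p k) + α • A' (A (x (k+1)) - B (y (k+1)))
          + φ' (x (k+1)) - φ' (x k) := by abel
    rw [h1, ← sub_eq_zero, h3, h2]
  -- descent from the x-update
  have keyX : ∀ k, augL A B f g α (x (k+1)) (y (k+1)) (p k)
      + μ₁/2 * ‖x (k+1) - x k‖^2 ≤ augL A B f g α (x k) (y (k+1)) (p k) := by
    intro k
    have hbreg0 : bregman φ φ' (x k) (x k) = 0 := by simp [bregman]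
    have hbregnn : 0 ≤ bregman φ φ' (x (k+1)) (x k) := by
      have := subgrad hφconv (hφdiff (x k)) (u := x (k+1))
      simp only [bregman]; linarith
    rcases hsc with h1 | h2
    · -- augmented Lagrangian strongly convex in x
      have hGgrad := hasGradientAt_G A B f g α f' φ' φ hfgrad hφdiff
        (y (k+1)) (p k) (x k) (x (k+1))
      have hgz : f' (x (k+1)) + A' (p k)
          + α • A' (A (x (k+1)) - B (y (k+1))) + φ' (x (k+1)) - φ' (x k) = 0 := hzero k
      have hGgrad0 : HasGradientAt (fun x' => augL A B f g α x' (y (k+1)) (p k)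
          + bregman φ φ' x' (x k)) 0 (x (k+1)) := by
        rw [← hgz]; exact hGgrad
      have hGt : HasGradientAt (fun x' => (augL A B f g α x' (y (k+1)) (p k)
          + bregman φ φ' x' (x k)) - μ₁/2 * ‖x'‖^2)
          (0 - μ₁ • x (k+1)) (x (k+1)) :=
        HasGradientAt.sub' hGgrad0 (hasGradientAt_normSq μ₁ (x (k+1)))
      have hconvG : ConvexOn ℝ Set.univ (fun x' => (augL A B f g α x' (y (k+1)) (p k)
          + bregman φ φ' x' (x k)) - μ₁/2 * ‖x'‖^2) := by
        have hb : ConvexOn ℝ Set.univ (fun x' => bregman φ φ' x' (x k)) := by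
          have heq : (fun x' => bregman φ φ' x' (x k))
              = fun x' => φ x' + ((⟪φ' (x k), x k⟫_ℝ - φ (x k)) - ⟪φ' (x k), x'⟫_ℝ) :=
            funext fun x' => by simp [bregman, inner_sub_right]; ring
          rw [heq]
          exact hφconv.add (convexOn_inner_const _ _)
        have hadd := (h1 (y (k+1)) (p k)).add hb
        have heq2 : ((fun x => augL A B f g α x (y (k+1)) (p k) - μ₁ / 2 * ‖x‖ ^ 2)
            + fun x' => bregman φ φ' x' (x k))
            = fun x' => (augL A B f g α x' (y (k+1)) (p k)
              + bregman φ φ' x' (x k)) - μ₁/2 * ‖x'‖^2 :=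
          funext fun x' => by simp only [Pi.add_apply]; ring
        rwa [heq2] at hadd
      have hsg0 := subgrad hconvG hGt (u := x k)
      have hsg : ⟪(0 : EuclideanSpace ℝ (Fin n₁)) - μ₁ • x (k+1), x k - x (k+1)⟫_ℝ
          ≤ (augL A B f g α (x k) (y (k+1)) (p k) + bregman φ φ' (x k) (x k)
              - μ₁/2 * ‖x k‖^2)
            - (augL A B f g α (x (k+1)) (y (k+1)) (p k)
              + bregman φ φ' (x (k+1)) (x k) - μ₁/2 * ‖x (k+1)‖^2) := hsg0
      have hns : ‖x (k+1) - x k‖^2 = ‖x k‖^2 - 2 * ⟪x k, x (k+1)⟫_ℝ + ‖x (k+1)‖^2 := by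
        rw [← neg_sub (x k) (x (k+1)), norm_neg]
        exact norm_sub_sq_real _ _
      have hin : ⟪(0 : EuclideanSpace ℝ (Fin n₁)) - μ₁ • x (k+1), x k - x (k+1)⟫_ℝ
          = -(μ₁ * ⟪x k, x (k+1)⟫_ℝ) + μ₁ * ‖x (k+1)‖^2 := by
        rw [zero_sub, inner_neg_left, real_inner_smul_left, inner_sub_right,
          real_inner_self_eq_norm_sq, real_inner_comm]
        ring
      rw [hin] at hsg
      rw [hbreg0] at hsg
      nlinarith [hsg, hns, hbregnn]
    · -- φ strongly convex
      have hφt : HasGradientAt (fun x' => φ x' - μ₁/2 * ‖x'‖^2)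
          (φ' (x k) - μ₁ • x k) (x k) :=
        HasGradientAt.sub' (hφdiff (x k)) (hasGradientAt_normSq μ₁ (x k))
      have hsg0 := subgrad h2 hφt (u := x (k+1))
      have hsg : ⟪φ' (x k) - μ₁ • x k, x (k+1) - x k⟫_ℝ
          ≤ (φ (x (k+1)) - μ₁/2 * ‖x (k+1)‖^2) - (φ (x k) - μ₁/2 * ‖x k‖^2) := hsg0
      have hns : ‖x (k+1) - x k‖^2 = ‖x (k+1)‖^2 - 2 * ⟪x (k+1), x k⟫_ℝ + ‖x k‖^2 :=
        norm_sub_sq_real _ _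
      have hin : ⟪φ' (x k) - μ₁ • x k, x (k+1) - x k⟫_ℝ
          = (⟪φ' (x k), x (k+1)⟫_ℝ - ⟪φ' (x k), x k⟫_ℝ)
            - μ₁ * ⟪x (k+1), x k⟫_ℝ + μ₁ * ‖x k‖^2 := by
        simp only [inner_sub_left, inner_sub_right, real_inner_smul_left,
          real_inner_self_eq_norm_sq]
        rw [real_inner_comm (x k) (x (k+1))]
        ring
      rw [hin] at hsg
      have hbregsc : μ₁/2 * ‖x (k+1) - x k‖^2 ≤ bregman φ φ' (x (k+1)) (x k) := by
        simp only [bregman, inner_sub_right]; nlinarith [hsg, hns]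
      have := hx k (x k)
      rw [hbreg0] at this
      linarith
  -- descent from the y-update
  have keyY : ∀ k, augL A B f g α (x k) (y (k+1)) (p k)
      ≤ augL A B f g α (x k) (y k) (p k) := by
    intro k
    have hbreg0 : bregman ψ ψ' (y k) (y k) = 0 := by simp [bregman]
    have hbregnn : 0 ≤ bregman ψ ψ' (y (k+1)) (y k) := by
      have := subgrad hψconv (hψdiff (y k)) (u := y (k+1))
      simp only [bregman]; linarith
    have := hy k (y k)
    rw [hbreg0] at this
    linarith
  -- multiplier update cost
  have keyP : ∀ k, augL A B f g α (x (k+1)) (y (k+1)) (p (k+1))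
      = augL A B f g α (x (k+1)) (y (k+1)) (p k)
        + 1/α * ‖p (k+1) - p k‖^2 := by
    intro k
    have hpd : p (k+1) - p k = α • (A (x (k+1)) - B (y (k+1))) := by
      rw [hp k]; abel
    have hnp : ‖p (k+1) - p k‖^2 = α^2 * ‖A (x (k+1)) - B (y (k+1))‖^2 := by
      rw [hpd, norm_smul]
      simp [mul_pow, abs_of_pos hα]
    have hw : ⟪p (k+1), A (x (k+1)) - B (y (k+1))⟫_ℝ
        = ⟪p k, A (x (k+1)) - B (y (k+1))⟫_ℝ
          + α * ‖A (x (k+1)) - B (y (k+1))‖^2 := by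
      rw [hp k, inner_add_left, real_inner_smul_left, real_inner_self_eq_norm_sq]
    simp only [augL, hw, hnp]
    field_simp
    ring
  -- bound on the multiplier difference
  have keyBound : ∀ j : ℕ, μ₀ * ‖p (j+2) - p (j+1)‖^2
      ≤ 2 * (ℓf + ℓφ)^2 * ‖x (j+2) - x (j+1)‖^2 + 2 * ℓφ^2 * ‖x (j+1) - x j‖^2 := by
    intro j
    set a := ‖x (j+2) - x (j+1)‖ with ha
    set b := ‖x (j+1) - x j‖ with hb
    have ha0 : 0 ≤ a := norm_nonneg _
    have hb0 : 0 ≤ b := norm_nonneg _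
    have hAd : A' (p (j+2) - p (j+1))
        = -(f' (x (j+2)) - f' (x (j+1))) - (φ' (x (j+2)) - φ' (x (j+1)))
          + (φ' (x (j+1)) - φ' (x j)) := by
      rw [map_sub, keyGrad (j+1), keyGrad j]
      abel
    have hnorm : ‖A' (p (j+2) - p (j+1))‖ ≤ (ℓf + ℓφ) * a + ℓφ * b := by
      rw [hAd]
      calc ‖-(f' (x (j+2)) - f' (x (j+1))) - (φ' (x (j+2)) - φ' (x (j+1)))
            + (φ' (x (j+1)) - φ' (x j))‖
          ≤ ‖-(f' (x (j+2)) - f' (x (j+1))) - (φ' (x (j+2)) - φ' (x (j+1)))‖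
            + ‖φ' (x (j+1)) - φ' (x j)‖ := norm_add_le _ _
        _ ≤ ‖-(f' (x (j+2)) - f' (x (j+1)))‖ + ‖φ' (x (j+2)) - φ' (x (j+1))‖
            + ‖φ' (x (j+1)) - φ' (x j)‖ := by
              have := norm_sub_le (-(f' (x (j+2)) - f' (x (j+1))))
                (φ' (x (j+2)) - φ' (x (j+1)))
              linarith
        _ ≤ ℓf * a + ℓφ * a + ℓφ * b := by
              rw [norm_neg]
              have h1 := hf' (x (j+2)) (x (j+1))
              have h2 := hφ' (x (j+2)) (x (j+1))
              have h3 := hφ' (x (j+1)) (x j)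
              rw [← ha] at h1 h2
              rw [← hb] at h3
              linarith
        _ = (ℓf + ℓφ) * a + ℓφ * b := by ring
    have hAq := hA (p (j+2) - p (j+1))
    have hsq : ‖A' (p (j+2) - p (j+1))‖^2 ≤ ((ℓf + ℓφ) * a + ℓφ * b)^2 := by
      apply sq_le_sq' _ hnorm
      have : 0 ≤ ‖A' (p (j+2) - p (j+1))‖ := norm_nonneg _
      nlinarith
    nlinarith [sq_nonneg ((ℓf + ℓφ) * a - ℓφ * b)]
  -- choose the constants
  set S1 := (ℓf + ℓφ)^2 with hS1
  set S2 := ℓφ^2 with hS2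
  have hS1nn : 0 ≤ S1 := sq_nonneg _
  have hS2nn : 0 ≤ S2 := sq_nonneg _
  set δ := μ₁/2 - 2*(S1 + S2)/(α*μ₀) with hδdef
  have hδ : 0 < δ := by
    rw [hδdef, sub_pos, div_lt_iff₀ (by positivity)]
    rw [gt_iff_lt, div_lt_iff₀ (by positivity)] at hαbig
    nlinarith
  refine ⟨2*(2*S2/(α*μ₀)) + δ/2, by positivity, δ/4, by positivity, ?_⟩
  intro k hk
  obtain ⟨j, rfl⟩ : ∃ j, k = j + 1 := ⟨k - 1, (Nat.succ_pred_eq_of_pos hk).symm⟩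
  have hj2 : j + 1 + 1 = j + 2 := rfl
  have hkP := keyP (j+1)
  have hkX := keyX (j+1)
  have hkY := keyY (j+1)
  have hkB := keyBound j
  simp only [hj2] at hkP hkX hkY
  simp only [Nat.add_sub_cancel, hj2]
  set a := ‖x (j+2) - x (j+1)‖ with ha
  set b := ‖x (j+1) - x j‖ with hb
  have ha2 : 0 ≤ a^2 := sq_nonneg _
  have hb2 : 0 ≤ b^2 := sq_nonneg _
  have hP0 : 0 ≤ ‖p (j+2) - p (j+1)‖^2 := sq_nonneg _
  -- divide the bound by α, μ₀
  have hPbound : 1/α * ‖p (j+2) - p (j+1)‖^2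
      ≤ 2*S1/(α*μ₀) * a^2 + 2*S2/(α*μ₀) * b^2 := by
    have h1 : ‖p (j+2) - p (j+1)‖^2 ≤ (2*S1*a^2 + 2*S2*b^2)/μ₀ := by
      rw [le_div_iff₀ hμ₀]
      nlinarith [hkB]
    calc 1/α * ‖p (j+2) - p (j+1)‖^2
        ≤ 1/α * ((2*S1*a^2 + 2*S2*b^2)/μ₀) := by
          apply mul_le_mul_of_nonneg_left h1 (by positivity)
      _ = 2*S1/(α*μ₀) * a^2 + 2*S2/(α*μ₀) * b^2 := by
          field_simp
  have hchain : augL A B f g α (x (j+2)) (y (j+2)) (p (j+2))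
      ≤ augL A B f g α (x (j+1)) (y (j+1)) (p (j+1)) - μ₁/2 * a^2
        + 1/α * ‖p (j+2) - p (j+1)‖^2 := by
    rw [hkP]
    linarith
  clear_value a b δ S1 S2
  have hfin : δ/4 * a^2 + (2*(2*S2/(α*μ₀)) + δ/2)/2 * a^2
      - (2*(2*S2/(α*μ₀)) + δ/2)/2 * b^2
      ≤ μ₁/2 * a^2 - (2*S1/(α*μ₀) * a^2 + 2*S2/(α*μ₀) * b^2) := by
    have hδeq : μ₁/2 = δ + 2*S1/(α*μ₀) + 2*S2/(α*μ₀) := by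
      rw [hδdef]; ring
    rw [hδeq]
    nlinarith [mul_nonneg hδ.le ha2, mul_nonneg hδ.le hb2]
  set L1 := augL A B f g α (x (j+1)) (y (j+1)) (p (j+1)) with hL1
  set L2 := augL A B f g α (x (j+2)) (y (j+2)) (p (j+2)) with hL2
  set P := ‖p (j+2) - p (j+1)‖^2 with hPP
  clear_value L1 L2 P
  linarith [hchain, hPbound, hfin]
end

section
/- Suppose B satisfies ‖Bv‖² ≥ μ_B‖v‖² for all v ∈ ℝ^{n₂} with μ_B > 0, and the dual update holds at steps k−1 and k, i.e., p^{k+1} = p^k + α(Ax^{k+1} − By^{k+1}) and p^k = p^{k−1} + α(Ax^k − By^k). Then α²μ_B‖y^k − y^{k+1}‖² ≤ 3(‖p^k − p^{k+1}‖² + ‖p^{k−1} − p^k‖² + α²‖A‖²‖x^{k+1} − x^k‖²), where ‖A‖ is the operator norm of A. -/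
open scoped InnerProductSpace

theorem badmm_y_bound_sq {n₁ n₂ m : ℕ} (hn₁ : 0 < n₁) (hn₂ : 0 < n₂) (hm : 0 < m)
    (A : EuclideanSpace ℝ (Fin n₁) →L[ℝ] EuclideanSpace ℝ (Fin m))
    (B : EuclideanSpace ℝ (Fin n₂) →L[ℝ] EuclideanSpace ℝ (Fin m))
    (α : ℝ) (hα : 0 < α) (μB : ℝ) (hμB : 0 < μB)
    (hB : ∀ v : EuclideanSpace ℝ (Fin n₂), μB * ‖v‖ ^ 2 ≤ ‖B v‖ ^ 2)
    (x : ℕ → EuclideanSpace ℝ (Fin n₁)) (y : ℕ → EuclideanSpace ℝ (Fin n₂))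
    (p : ℕ → EuclideanSpace ℝ (Fin m)) (k : ℕ) (hk : 1 ≤ k)
    (hdual : p (k + 1) = p k + α • (A (x (k + 1)) - B (y (k + 1))))
    (hdual' : p k = p (k - 1) + α • (A (x k) - B (y k))) :
    α ^ 2 * μB * ‖y k - y (k + 1)‖ ^ 2 ≤
      3 * (‖p k - p (k + 1)‖ ^ 2 + ‖p (k - 1) - p k‖ ^ 2
        + α ^ 2 * ‖A‖ ^ 2 * ‖x (k + 1) - x k‖ ^ 2) := by
  have key : α • (B (y k - y (k + 1))) =
      (p (k + 1) - p k) + (p (k - 1) - p k) + α • (A (x k - x (k + 1))) := by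
    rw [map_sub, map_sub]
    rw [hdual, hdual']
    module
  have hnkey : ‖α • (B (y k - y (k + 1)))‖ ≤
      ‖p k - p (k + 1)‖ + ‖p (k - 1) - p k‖ + ‖α • (A (x k - x (k + 1)))‖ := by
    rw [key]
    calc ‖(p (k + 1) - p k) + (p (k - 1) - p k) + α • (A (x k - x (k + 1)))‖
        ≤ ‖(p (k + 1) - p k) + (p (k - 1) - p k)‖ + ‖α • (A (x k - x (k + 1)))‖ :=
          norm_add_le _ _
      _ ≤ ‖p (k + 1) - p k‖ + ‖p (k - 1) - p k‖ + ‖α • (A (x k - x (k + 1)))‖ := by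
          gcongr; exact norm_add_le _ _
      _ = ‖p k - p (k + 1)‖ + ‖p (k - 1) - p k‖ + ‖α • (A (x k - x (k + 1)))‖ := by
          rw [norm_sub_rev]
  have hA : ‖α • (A (x k - x (k + 1)))‖ ≤ α * (‖A‖ * ‖x (k + 1) - x k‖) := by
    rw [norm_smul, Real.norm_eq_abs, abs_of_pos hα]
    gcongr
    calc ‖A (x k - x (k + 1))‖ ≤ ‖A‖ * ‖x k - x (k + 1)‖ := A.le_opNorm _
      _ = ‖A‖ * ‖x (k + 1) - x k‖ := by rw [norm_sub_rev]
  have hL : α ^ 2 * μB * ‖y k - y (k + 1)‖ ^ 2 ≤ ‖α • (B (y k - y (k + 1)))‖ ^ 2 := by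
    rw [norm_smul, Real.norm_eq_abs, abs_of_pos hα, mul_pow]
    have := hB (y k - y (k + 1))
    nlinarith [sq_nonneg α]
  have h3 : ‖α • (B (y k - y (k + 1)))‖ ^ 2 ≤
      3 * (‖p k - p (k + 1)‖ ^ 2 + ‖p (k - 1) - p k‖ ^ 2
        + α ^ 2 * ‖A‖ ^ 2 * ‖x (k + 1) - x k‖ ^ 2) := by
    have h0 : (0:ℝ) ≤ ‖α • (B (y k - y (k + 1)))‖ := norm_nonneg _
    have hsum : ‖α • (B (y k - y (k + 1)))‖ ≤
        ‖p k - p (k + 1)‖ + ‖p (k - 1) - p k‖ + α * (‖A‖ * ‖x (k + 1) - x k‖) := by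
      linarith
    nlinarith [sq_nonneg (‖p k - p (k + 1)‖ - ‖p (k - 1) - p k‖),
      sq_nonneg (‖p k - p (k + 1)‖ - α * (‖A‖ * ‖x (k + 1) - x k‖)),
      sq_nonneg (‖p (k - 1) - p k‖ - α * (‖A‖ * ‖x (k + 1) - x k‖)),
      norm_nonneg (p k - p (k + 1)), norm_nonneg (p (k - 1) - p k),
      mul_nonneg (mul_nonneg hα.le (norm_nonneg A)) (norm_nonneg (x (k + 1) - x k))]
  linarith
end

section
/- Suppose the x-stationarity condition together with the dual update holds at steps k−1 and k (k ≥ 1). Then ‖p^{k+1} − p^k‖ ≤ (√2(ℓ_f + ℓ_φ)/√μ₀)·(‖x^{k+1} − x^k‖ + ‖x^k − x^{k−1}‖). -/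
open scoped InnerProductSpace

set_option maxHeartbeats 1000000

theorem badmm_dual_bound {n₁ n₂ m : ℕ} (hn₁ : 0 < n₁) (hn₂ : 0 < n₂) (hm : 0 < m)
    (A : EuclideanSpace ℝ (Fin n₁) →L[ℝ] EuclideanSpace ℝ (Fin m))
    (B : EuclideanSpace ℝ (Fin n₂) →L[ℝ] EuclideanSpace ℝ (Fin m))
    (f φ : EuclideanSpace ℝ (Fin n₁) → ℝ)
    (f' φ' : EuclideanSpace ℝ (Fin n₁) → EuclideanSpace ℝ (Fin n₁))
    (hf : ∀ u, HasGradientAt f (f' u) u) (hφ : ∀ u, HasGradientAt φ (φ' u) u)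
    (ℓf ℓφ : ℝ) (hℓf : 0 ≤ ℓf) (hℓφ : 0 ≤ ℓφ)
    (hf' : ∀ u v, ‖f' u - f' v‖ ≤ ℓf * ‖u - v‖)
    (hφ' : ∀ u v, ‖φ' u - φ' v‖ ≤ ℓφ * ‖u - v‖)
    (α μ₀ : ℝ) (hα : 0 < α) (hμ₀ : 0 < μ₀)
    (hA : ∀ q : EuclideanSpace ℝ (Fin m),
      μ₀ * ‖q‖ ^ 2 ≤ ‖ContinuousLinearMap.adjoint A q‖ ^ 2)
    (x : ℕ → EuclideanSpace ℝ (Fin n₁)) (y : ℕ → EuclideanSpace ℝ (Fin n₂))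
    (p : ℕ → EuclideanSpace ℝ (Fin m)) (k : ℕ) (hk : 1 ≤ k)
    (hstat : ∀ j, (j = k - 1 ∨ j = k) →
      f' (x (j + 1)) + ContinuousLinearMap.adjoint A (p j)
        + α • ContinuousLinearMap.adjoint A (A (x (j + 1)) - B (y (j + 1)))
        + φ' (x (j + 1)) - φ' (x j) = 0)
    (hdual : ∀ j, (j = k - 1 ∨ j = k) →
      p (j + 1) = p j + α • (A (x (j + 1)) - B (y (j + 1)))) :
    ‖p (k + 1) - p k‖ ≤
      Real.sqrt 2 * (ℓf + ℓφ) / Real.sqrt μ₀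
        * (‖x (k + 1) - x k‖ + ‖x k - x (k - 1)‖) := by
  set T := ContinuousLinearMap.adjoint A with hT
  have key : ∀ j, (j = k - 1 ∨ j = k) →
      T (p (j + 1)) = -(f' (x (j + 1))) - φ' (x (j + 1)) + φ' (x j) := by
    intro j hj
    have h1 := hstat j hj
    rw [hdual j hj, map_add, map_smul]
    apply eq_of_sub_eq_zero
    rw [← h1]
    abel
  obtain ⟨k', rfl⟩ : ∃ k', k = k' + 1 := ⟨k - 1, (Nat.succ_pred_eq_of_pos hk).symm⟩
  have hk1 : k' + 1 - 1 = k' := by omega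
  have e1 : T (p (k' + 1 + 1)) = -(f' (x (k' + 1 + 1))) - φ' (x (k' + 1 + 1))
      + φ' (x (k' + 1)) := key (k' + 1) (Or.inr rfl)
  have e2 : T (p (k' + 1)) = -(f' (x (k' + 1))) - φ' (x (k' + 1)) + φ' (x k') :=
    key k' (Or.inl hk1.symm)
  set q := p (k' + 1 + 1) - p (k' + 1) with hq
  have eTq : T q = -(f' (x (k' + 1 + 1)) - f' (x (k' + 1)))
      - (φ' (x (k' + 1 + 1)) - φ' (x (k' + 1))) + (φ' (x (k' + 1)) - φ' (x k')) := by
    rw [hq, map_sub, e1, e2]; abel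
  have hnTq : ‖T q‖ ≤ (ℓf + ℓφ) * (‖x (k' + 1 + 1) - x (k' + 1)‖ + ‖x (k' + 1) - x k'‖) := by
    rw [eTq]
    have t1 := hf' (x (k' + 1 + 1)) (x (k' + 1))
    have t2 := hφ' (x (k' + 1 + 1)) (x (k' + 1))
    have t3 := hφ' (x (k' + 1)) (x k')
    have hb : 0 ≤ ℓf * ‖x (k' + 1) - x k'‖ := by positivity
    calc ‖-(f' (x (k' + 1 + 1)) - f' (x (k' + 1)))
        - (φ' (x (k' + 1 + 1)) - φ' (x (k' + 1))) + (φ' (x (k' + 1)) - φ' (x k'))‖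
        ≤ ‖-(f' (x (k' + 1 + 1)) - f' (x (k' + 1)))
            - (φ' (x (k' + 1 + 1)) - φ' (x (k' + 1)))‖ + ‖φ' (x (k' + 1)) - φ' (x k')‖ :=
          norm_add_le _ _
      _ ≤ ‖f' (x (k' + 1 + 1)) - f' (x (k' + 1))‖ + ‖φ' (x (k' + 1 + 1)) - φ' (x (k' + 1))‖
            + ‖φ' (x (k' + 1)) - φ' (x k')‖ := by
          have := norm_sub_le (-(f' (x (k' + 1 + 1)) - f' (x (k' + 1))))
            (φ' (x (k' + 1 + 1)) - φ' (x (k' + 1)))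
          rw [norm_neg] at this
          linarith
      _ ≤ (ℓf + ℓφ) * (‖x (k' + 1 + 1) - x (k' + 1)‖ + ‖x (k' + 1) - x k'‖) := by
          nlinarith [norm_nonneg (x (k' + 1 + 1) - x (k' + 1)), norm_nonneg (x (k' + 1) - x k')]
  have hμq : Real.sqrt μ₀ * ‖q‖ ≤ ‖T q‖ := by
    have h := hA q
    have h2 : Real.sqrt (μ₀ * ‖q‖ ^ 2) ≤ Real.sqrt (‖T q‖ ^ 2) := Real.sqrt_le_sqrt h
    rwa [Real.sqrt_mul hμ₀.le, Real.sqrt_sq (norm_nonneg _), Real.sqrt_sq (norm_nonneg _)] at h2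
  have hsμ : 0 < Real.sqrt μ₀ := Real.sqrt_pos.mpr hμ₀
  have hqle : ‖q‖ ≤ (ℓf + ℓφ) / Real.sqrt μ₀
      * (‖x (k' + 1 + 1) - x (k' + 1)‖ + ‖x (k' + 1) - x k'‖) := by
    rw [div_mul_eq_mul_div, le_div_iff₀ hsμ]
    calc ‖q‖ * Real.sqrt μ₀ = Real.sqrt μ₀ * ‖q‖ := by ring
      _ ≤ ‖T q‖ := hμq
      _ ≤ _ := hnTq
  rw [hk1]
  refine hqle.trans ?_
  have h2 : (1 : ℝ) ≤ Real.sqrt 2 := by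
    rw [show (1:ℝ) = Real.sqrt 1 by simp]
    exact Real.sqrt_le_sqrt (by norm_num)
  have hpos : 0 ≤ ‖x (k' + 1 + 1) - x (k' + 1)‖ + ‖x (k' + 1) - x k'‖ := by positivity
  have hnum : ℓf + ℓφ ≤ Real.sqrt 2 * (ℓf + ℓφ) := by nlinarith
  have hfrac : (ℓf + ℓφ) / Real.sqrt μ₀ ≤ Real.sqrt 2 * (ℓf + ℓφ) / Real.sqrt μ₀ := by
    gcongr
  exact mul_le_mul_of_nonneg_right hfrac hpos
end

section
/- Suppose in addition that B satisfies ‖Bv‖² ≥ μ_B‖v‖² for all v ∈ ℝ^{n₂} with μ_B > 0, and that the x-stationarity condition together with the dual update holds at steps k−3, k−2, k−1 and k (k ≥ 3). Then there exists a constant κ₂ > 0, depending only on ℓ_f, ℓ_φ, μ₀, μ_B, α and the operator norm ‖A‖, such that ‖y^k − y^{k+1}‖ ≤ κ₂(‖x^k − x^{k+1}‖ + ‖x^k − x^{k−1}‖ + ‖x^{k−1} − x^{k−2}‖). -/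
open scoped InnerProductSpace

set_option maxHeartbeats 1000000

theorem badmm_y_diff_bound {n₁ n₂ m : ℕ} (hn₁ : 0 < n₁) (hn₂ : 0 < n₂) (hm : 0 < m)
    (A : EuclideanSpace ℝ (Fin n₁) →L[ℝ] EuclideanSpace ℝ (Fin m))
    (B : EuclideanSpace ℝ (Fin n₂) →L[ℝ] EuclideanSpace ℝ (Fin m))
    (f φ : EuclideanSpace ℝ (Fin n₁) → ℝ)
    (f' φ' : EuclideanSpace ℝ (Fin n₁) → EuclideanSpace ℝ (Fin n₁))
    (hf : ∀ u, HasGradientAt f (f' u) u) (hφ : ∀ u, HasGradientAt φ (φ' u) u)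
    (ℓf ℓφ : ℝ) (hℓf : 0 ≤ ℓf) (hℓφ : 0 ≤ ℓφ)
    (hf' : ∀ u v, ‖f' u - f' v‖ ≤ ℓf * ‖u - v‖)
    (hφ' : ∀ u v, ‖φ' u - φ' v‖ ≤ ℓφ * ‖u - v‖)
    (α μ₀ μB : ℝ) (hα : 0 < α) (hμ₀ : 0 < μ₀) (hμB : 0 < μB)
    (hA : ∀ q : EuclideanSpace ℝ (Fin m),
      μ₀ * ‖q‖ ^ 2 ≤ ‖ContinuousLinearMap.adjoint A q‖ ^ 2)
    (hB : ∀ v : EuclideanSpace ℝ (Fin n₂), μB * ‖v‖ ^ 2 ≤ ‖B v‖ ^ 2) :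
    ∃ κ₂ > (0 : ℝ),
      ∀ (x : ℕ → EuclideanSpace ℝ (Fin n₁)) (y : ℕ → EuclideanSpace ℝ (Fin n₂))
        (p : ℕ → EuclideanSpace ℝ (Fin m)) (k : ℕ), 3 ≤ k →
        (∀ j, (j = k - 3 ∨ j = k - 2 ∨ j = k - 1 ∨ j = k) →
          f' (x (j + 1)) + ContinuousLinearMap.adjoint A (p j)
            + α • ContinuousLinearMap.adjoint A (A (x (j + 1)) - B (y (j + 1)))
            + φ' (x (j + 1)) - φ' (x j) = 0) →
        (∀ j, (j = k - 3 ∨ j = k - 2 ∨ j = k - 1 ∨ j = k) →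
          p (j + 1) = p j + α • (A (x (j + 1)) - B (y (j + 1)))) →
        ‖y k - y (k + 1)‖ ≤
          κ₂ * (‖x k - x (k + 1)‖ + ‖x k - x (k - 1)‖ + ‖x (k - 1) - x (k - 2)‖) := by
  set M := ContinuousLinearMap.adjoint A with hMdef
  set s0 := Real.sqrt μ₀ with hs0
  set sB := Real.sqrt μB with hsB
  have s0pos : 0 < s0 := Real.sqrt_pos.2 hμ₀
  have sBpos : 0 < sB := Real.sqrt_pos.2 hμB
  have hAq : ∀ q : EuclideanSpace ℝ (Fin m), s0 * ‖q‖ ≤ ‖M q‖ := by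
    intro q
    have h := Real.sqrt_le_sqrt (hA q)
    rwa [Real.sqrt_mul hμ₀.le, Real.sqrt_sq (norm_nonneg _), Real.sqrt_sq (norm_nonneg _)] at h
  have hBv : ∀ v : EuclideanSpace ℝ (Fin n₂), sB * ‖v‖ ≤ ‖B v‖ := by
    intro v
    have h := Real.sqrt_le_sqrt (hB v)
    rwa [Real.sqrt_mul hμB.le, Real.sqrt_sq (norm_nonneg _), Real.sqrt_sq (norm_nonneg _)] at h
  have hκpos : (0:ℝ) < (‖A‖ + (ℓf + 2*ℓφ) / (α * s0)) / sB + 1 := by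
    have h1 : 0 ≤ (‖A‖ + (ℓf + 2*ℓφ) / (α * s0)) / sB := by
      apply div_nonneg _ sBpos.le
      have : 0 ≤ (ℓf + 2*ℓφ) / (α * s0) := by
        apply div_nonneg (by linarith) (by positivity)
      have := norm_nonneg A
      linarith
    linarith
  refine ⟨(‖A‖ + (ℓf + 2*ℓφ) / (α * s0)) / sB + 1, hκpos, ?_⟩
  intro x y p k hk hstat hdual
  have hk1 : k - 1 + 1 = k := by omega
  have hk2 : k - 2 + 1 = k - 1 := by omega
  -- key identity: M (p (j+1)) = φ' (x j) - f' (x (j+1)) - φ' (x (j+1))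
  have key : ∀ j, (j = k - 3 ∨ j = k - 2 ∨ j = k - 1 ∨ j = k) →
      M (p (j + 1)) = φ' (x j) - f' (x (j + 1)) - φ' (x (j + 1)) := by
    intro j hj
    have h1 := hstat j hj
    have h2 := hdual j hj
    have h3 : M (p (j + 1)) = M (p j) + α • M (A (x (j + 1)) - B (y (j + 1))) := by
      rw [h2]; simp [map_add, map_smul]
    rw [h3, ← sub_eq_zero, ← h1]
    abel
  have e1 : M (p (k + 1)) = φ' (x k) - f' (x (k + 1)) - φ' (x (k + 1)) :=
    key k (by tauto)
  have e2 : M (p k) = φ' (x (k - 1)) - f' (x k) - φ' (x k) := by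
    have h := key (k - 1) (by tauto); rwa [hk1] at h
  have e3 : M (p (k - 1)) = φ' (x (k - 2)) - f' (x (k - 1)) - φ' (x (k - 1)) := by
    have h := key (k - 2) (by tauto); rwa [hk2] at h
  set d1 := ‖x k - x (k + 1)‖ with hd1
  set d2 := ‖x k - x (k - 1)‖ with hd2
  set d3 := ‖x (k - 1) - x (k - 2)‖ with hd3
  set N1 := ‖p (k + 1) - p k‖ with hN1
  set N0 := ‖p k - p (k - 1)‖ with hN0
  have n1 : s0 * N1 ≤ (ℓf + ℓφ) * d1 + ℓφ * d2 := by
    have m1 : M (p (k + 1) - p k)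
        = (f' (x k) - f' (x (k + 1))) + ((φ' (x k) - φ' (x (k + 1))) + (φ' (x k) - φ' (x (k - 1)))) := by
      rw [map_sub, e1, e2]; abel
    calc s0 * N1 ≤ ‖M (p (k + 1) - p k)‖ := hAq _
      _ = ‖(f' (x k) - f' (x (k + 1))) + ((φ' (x k) - φ' (x (k + 1))) + (φ' (x k) - φ' (x (k - 1))))‖ := by
          rw [m1]
      _ ≤ ‖f' (x k) - f' (x (k + 1))‖ + (‖φ' (x k) - φ' (x (k + 1))‖ + ‖φ' (x k) - φ' (x (k - 1))‖) :=
          (norm_add_le _ _).trans (by gcongr; exact norm_add_le _ _)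
      _ ≤ (ℓf + ℓφ) * d1 + ℓφ * d2 := by
          have a1 := hf' (x k) (x (k + 1))
          have a2 := hφ' (x k) (x (k + 1))
          have a3 := hφ' (x k) (x (k - 1))
          linarith
  have n0 : s0 * N0 ≤ (ℓf + ℓφ) * d2 + ℓφ * d3 := by
    have m0 : M (p k - p (k - 1))
        = (f' (x (k - 1)) - f' (x k)) + ((φ' (x (k - 1)) - φ' (x k)) + (φ' (x (k - 1)) - φ' (x (k - 2)))) := by
      rw [map_sub, e2, e3]; abel
    calc s0 * N0 ≤ ‖M (p k - p (k - 1))‖ := hAq _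
      _ = ‖(f' (x (k - 1)) - f' (x k)) + ((φ' (x (k - 1)) - φ' (x k)) + (φ' (x (k - 1)) - φ' (x (k - 2))))‖ := by
          rw [m0]
      _ ≤ ‖f' (x (k - 1)) - f' (x k)‖ + (‖φ' (x (k - 1)) - φ' (x k)‖ + ‖φ' (x (k - 1)) - φ' (x (k - 2))‖) :=
          (norm_add_le _ _).trans (by gcongr; exact norm_add_le _ _)
      _ ≤ (ℓf + ℓφ) * d2 + ℓφ * d3 := by
          have a1 := hf' (x (k - 1)) (x k)
          have a2 := hφ' (x (k - 1)) (x k)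
          have a3 := hφ' (x (k - 1)) (x (k - 2))
          have r1 : ‖x (k - 1) - x k‖ = d2 := by rw [hd2, norm_sub_rev]
          rw [r1] at a1 a2
          linarith
  -- B equation
  have q1 : p k - p (k - 1) = α • (A (x k)) - α • (B (y k)) := by
    have h := hdual (k - 1) (by tauto)
    rw [hk1] at h
    rw [h]; rw [smul_sub]; abel
  have q2 : p (k + 1) - p k = α • (A (x (k + 1))) - α • (B (y (k + 1))) := by
    have h := hdual k (by tauto)
    rw [h]; rw [smul_sub]; abel
  have hBid : α • B (y k - y (k + 1))
      = α • A (x k - x (k + 1)) - (p k - p (k - 1)) + (p (k + 1) - p k) := by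
    rw [q1, q2, map_sub, map_sub, smul_sub, smul_sub]; abel
  set dy := ‖y k - y (k + 1)‖ with hdy
  have hBn : α * (sB * dy) ≤ α * ‖A‖ * d1 + N0 + N1 := by
    have step1 : α * (sB * dy) ≤ α * ‖B (y k - y (k + 1))‖ :=
      mul_le_mul_of_nonneg_left (hBv _) hα.le
    have step2 : α * ‖B (y k - y (k + 1))‖ = ‖α • B (y k - y (k + 1))‖ := by
      rw [norm_smul, Real.norm_of_nonneg hα.le]
    have step3 : ‖α • A (x k - x (k + 1)) - (p k - p (k - 1)) + (p (k + 1) - p k)‖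
        ≤ ‖α • A (x k - x (k + 1))‖ + N0 + N1 := by
      calc ‖α • A (x k - x (k + 1)) - (p k - p (k - 1)) + (p (k + 1) - p k)‖
          ≤ ‖α • A (x k - x (k + 1)) - (p k - p (k - 1))‖ + N1 := norm_add_le _ _
        _ ≤ ‖α • A (x k - x (k + 1))‖ + N0 + N1 :=
            add_le_add_left (norm_sub_le _ _) _
    have step4 : ‖α • A (x k - x (k + 1))‖ ≤ α * ‖A‖ * d1 := by
      rw [norm_smul, Real.norm_of_nonneg hα.le, mul_assoc]
      exact mul_le_mul_of_nonneg_left (A.le_opNorm _) hα.le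
    calc α * (sB * dy) ≤ ‖α • B (y k - y (k + 1))‖ := step1.trans_eq step2
      _ = ‖α • A (x k - x (k + 1)) - (p k - p (k - 1)) + (p (k + 1) - p k)‖ := by rw [hBid]
      _ ≤ ‖α • A (x k - x (k + 1))‖ + N0 + N1 := step3
      _ ≤ α * ‖A‖ * d1 + N0 + N1 := by linarith
  -- combine
  have hd1n : 0 ≤ d1 := norm_nonneg _
  have hd2n : 0 ≤ d2 := norm_nonneg _
  have hd3n : 0 ≤ d3 := norm_nonneg _
  have hAn : 0 ≤ ‖A‖ := norm_nonneg _
  have hmain : α * s0 * sB * dy ≤ (α * s0 * ‖A‖ + ℓf + 2 * ℓφ) * (d1 + d2 + d3) := by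
    have h1' := mul_le_mul_of_nonneg_left hBn s0pos.le
    nlinarith [mul_nonneg (mul_nonneg (mul_nonneg hα.le s0pos.le) hAn) hd2n,
      mul_nonneg (mul_nonneg (mul_nonneg hα.le s0pos.le) hAn) hd3n,
      mul_nonneg hℓf hd1n, mul_nonneg hℓφ hd1n, mul_nonneg hℓf hd3n,
      mul_nonneg hℓφ hd2n, mul_nonneg hℓφ hd3n, mul_nonneg hℓf hd2n]
  have hK : α * s0 * ‖A‖ + ℓf + 2 * ℓφ ≤ ((‖A‖ + (ℓf + 2*ℓφ) / (α * s0)) / sB + 1) * (α * s0 * sB) := by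
    have hαs0 : (0:ℝ) < α * s0 := by positivity
    field_simp
    nlinarith [mul_pos hαs0 sBpos]
  have hS : 0 ≤ d1 + d2 + d3 := by linarith
  have hP : (0:ℝ) < α * s0 * sB := by positivity
  have hfin : α * s0 * sB * dy ≤ α * s0 * sB * (((‖A‖ + (ℓf + 2*ℓφ) / (α * s0)) / sB + 1) * (d1 + d2 + d3)) := by
    have := mul_le_mul_of_nonneg_right hK hS
    calc α * s0 * sB * dy ≤ (α * s0 * ‖A‖ + ℓf + 2 * ℓφ) * (d1 + d2 + d3) := hmain
      _ ≤ ((‖A‖ + (ℓf + 2*ℓφ) / (α * s0)) / sB + 1) * (α * s0 * sB) * (d1 + d2 + d3) := this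
      _ = α * s0 * sB * (((‖A‖ + (ℓf + 2*ℓφ) / (α * s0)) / sB + 1) * (d1 + d2 + d3)) := by ring
  exact le_of_mul_le_mul_left hfin hP
end

section
/- (x-component of Lemma III.3) Suppose the x-stationarity condition together with the dual update holds at step k, and let σ₀ > 0. Then ‖∇f(x^{k+1}) + A^⊤p^{k+1} + αA^⊤(Ax^{k+1} − By^{k+1}) + σ₀(x^{k+1} − x^k)‖ ≤ (ℓ_φ + σ₀)‖x^{k+1} − x^k‖ + ‖A‖·‖p^{k+1} − p^k‖, where ‖A‖ is the operator norm of A (equivalently, of A^⊤). -/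
open scoped InnerProductSpace

theorem badmm_x_subgrad_bound {n₁ n₂ m : ℕ} (hn₁ : 0 < n₁) (hn₂ : 0 < n₂) (hm : 0 < m)
    (A : EuclideanSpace ℝ (Fin n₁) →L[ℝ] EuclideanSpace ℝ (Fin m))
    (B : EuclideanSpace ℝ (Fin n₂) →L[ℝ] EuclideanSpace ℝ (Fin m))
    (f φ : EuclideanSpace ℝ (Fin n₁) → ℝ)
    (f' φ' : EuclideanSpace ℝ (Fin n₁) → EuclideanSpace ℝ (Fin n₁))
    (hf : ∀ u, HasGradientAt f (f' u) u) (hφ : ∀ u, HasGradientAt φ (φ' u) u)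
    (ℓφ : ℝ) (hℓφ : 0 ≤ ℓφ)
    (hφ' : ∀ u v, ‖φ' u - φ' v‖ ≤ ℓφ * ‖u - v‖)
    (α : ℝ) (hα : 0 < α)
    (x : ℕ → EuclideanSpace ℝ (Fin n₁)) (y : ℕ → EuclideanSpace ℝ (Fin n₂))
    (p : ℕ → EuclideanSpace ℝ (Fin m)) (k : ℕ)
    (hstat : f' (x (k + 1)) + ContinuousLinearMap.adjoint A (p k)
        + α • ContinuousLinearMap.adjoint A (A (x (k + 1)) - B (y (k + 1)))
        + φ' (x (k + 1)) - φ' (x k) = 0)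
    (hdual : p (k + 1) = p k + α • (A (x (k + 1)) - B (y (k + 1))))
    (σ₀ : ℝ) (hσ₀ : 0 < σ₀) :
    ‖f' (x (k + 1)) + ContinuousLinearMap.adjoint A (p (k + 1))
        + α • ContinuousLinearMap.adjoint A (A (x (k + 1)) - B (y (k + 1)))
        + σ₀ • (x (k + 1) - x k)‖ ≤
      (ℓφ + σ₀) * ‖x (k + 1) - x k‖ + ‖A‖ * ‖p (k + 1) - p k‖ := by
  have hrw : f' (x (k + 1)) + ContinuousLinearMap.adjoint A (p (k + 1))
        + α • ContinuousLinearMap.adjoint A (A (x (k + 1)) - B (y (k + 1)))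
        + σ₀ • (x (k + 1) - x k)
      = (φ' (x k) - φ' (x (k + 1)))
        + ContinuousLinearMap.adjoint A (p (k + 1) - p k)
        + σ₀ • (x (k + 1) - x k) := by
    have h2 := eq_sub_of_add_eq (sub_eq_zero.mp hstat)
    rw [hdual]
    simp only [map_add, map_smul, map_sub] at h2 ⊢
    linear_combination (norm := module) h2
  rw [hrw]
  calc ‖(φ' (x k) - φ' (x (k + 1)))
        + ContinuousLinearMap.adjoint A (p (k + 1) - p k)
        + σ₀ • (x (k + 1) - x k)‖
      ≤ ‖φ' (x k) - φ' (x (k + 1))‖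
        + ‖ContinuousLinearMap.adjoint A (p (k + 1) - p k)‖
        + ‖σ₀ • (x (k + 1) - x k)‖ := norm_add₃_le
    _ ≤ ℓφ * ‖x (k + 1) - x k‖ + ‖A‖ * ‖p (k + 1) - p k‖ + σ₀ * ‖x (k + 1) - x k‖ := by
        gcongr ?_ + ?_ + ?_
        · calc ‖φ' (x k) - φ' (x (k + 1))‖ ≤ ℓφ * ‖x k - x (k+1)‖ := hφ' _ _
            _ = ℓφ * ‖x (k+1) - x k‖ := by rw [norm_sub_rev]
        · calc ‖ContinuousLinearMap.adjoint A (p (k + 1) - p k)‖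
              ≤ ‖ContinuousLinearMap.adjoint A‖ * ‖p (k + 1) - p k‖ :=
                (ContinuousLinearMap.adjoint A).le_opNorm _
            _ = ‖A‖ * ‖p (k + 1) - p k‖ := by
                exact (ContinuousLinearMap.adjoint.norm_map A : _) ▸ rfl
        · rw [norm_smul, Real.norm_of_nonneg hσ₀.le]
    _ = (ℓφ + σ₀) * ‖x (k + 1) - x k‖ + ‖A‖ * ‖p (k + 1) - p k‖ := by ring
end

section
/- (Kurdyka–Łojasiewicz finite-length argument, engine of Theorem III.4) Let (L_k)_{k≥0} be a nonincreasing real sequence converging to L* with L_k > L* for all k, let (a_k)_{k≥0} be nonnegative reals, let σ₁ > 0, κ > 0, η > 0, and let φ : [0, η] → ℝ be continuous with φ(0) = 0, differentiable and concave on (0, η) with φ′ > 0 on (0, η). Assume: (i) σ₁a_k² ≤ L_k − L_{k+1} for all k; and (ii) there exists k₁ ≥ 3 such that for all k ≥ k₁, L_k − L* < η and κ·φ′(L_k − L*)·(a_{k−1} + a_{k−2} + a_{k−3}) ≥ 1. Then ∑_{k=0}^∞ a_k < ∞. -/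
theorem kl_finite_length_engine_III_4
    (L : ℕ → ℝ) (Lstar : ℝ) (hLmono : ∀ k, L (k + 1) ≤ L k)
    (hLlim : Filter.Tendsto L Filter.atTop (nhds Lstar))
    (hLgt : ∀ k, Lstar < L k)
    (a : ℕ → ℝ) (ha : ∀ k, 0 ≤ a k)
    (σ₁ κ η : ℝ) (hσ₁ : 0 < σ₁) (hκ : 0 < κ) (hη : 0 < η)
    (φ φ' : ℝ → ℝ)
    (hφcont : ContinuousOn φ (Set.Icc 0 η)) (hφ0 : φ 0 = 0)
    (hφderiv : ∀ t ∈ Set.Ioo (0 : ℝ) η, HasDerivAt φ (φ' t) t)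
    (hφconc : ConcaveOn ℝ (Set.Ioo 0 η) φ)
    (hφ'pos : ∀ t ∈ Set.Ioo (0 : ℝ) η, 0 < φ' t)
    (hdescent : ∀ k, σ₁ * a k ^ 2 ≤ L k - L (k + 1))
    (k₁ : ℕ) (hk₁ : 3 ≤ k₁)
    (hkl : ∀ k, k₁ ≤ k → L k - Lstar < η ∧
      1 ≤ κ * φ' (L k - Lstar) * (a (k - 1) + a (k - 2) + a (k - 3))) :
    Summable a := by
  set x : ℕ → ℝ := fun k => L k - Lstar with hx_def
  -- membership of x k in (0, η) for k ≥ k₁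
  have hxmem : ∀ k, k₁ ≤ k → x k ∈ Set.Ioo (0 : ℝ) η := fun k hk =>
    ⟨sub_pos.2 (hLgt k), (hkl k hk).1⟩
  -- φ is strictly monotone on [0, η]
  have hmono : StrictMonoOn φ (Set.Icc 0 η) := by
    apply strictMonoOn_of_deriv_pos (convex_Icc 0 η) hφcont
    intro t ht
    rw [interior_Icc] at ht
    rw [(hφderiv t ht).deriv]
    exact hφ'pos t ht
  have hφpos : ∀ t ∈ Set.Ioo (0 : ℝ) η, 0 < φ t := by
    intro t ht
    have := hmono (Set.left_mem_Icc.2 hη.le) ⟨ht.1.le, ht.2.le⟩ ht.1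
    rwa [hφ0] at this
  set Δ : ℕ → ℝ := fun k => φ (x k) with hΔ_def
  -- key per-step inequality
  have hstep : ∀ k, k₁ ≤ k → σ₁ * a k ^ 2 * φ' (x k) ≤ Δ k - Δ (k + 1) := by
    intro k hk
    have hxk := hxmem k hk
    have hxk1 : x (k + 1) ∈ Set.Ioo (0 : ℝ) η :=
      ⟨sub_pos.2 (hLgt (k + 1)), lt_of_le_of_lt (by simp [hx_def, hLmono k]) hxk.2⟩
    have hle : x (k + 1) ≤ x k := by simp [hx_def, hLmono k]
    have h2 : σ₁ * a k ^ 2 ≤ x k - x (k + 1) := by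
      have := hdescent k; simp only [hx_def]; linarith
    rcases eq_or_lt_of_le hle with heq | hlt
    · have h0 : σ₁ * a k ^ 2 ≤ 0 := by linarith [heq.ge]
      have ha2 : a k ^ 2 = 0 := by
        nlinarith [sq_nonneg (a k)]
      simp [hΔ_def, ← heq, ha2]
    · -- concavity: φ' (x k) ≤ slope φ (x (k+1)) (x k)
      have hslope := hφconc.le_slope_of_hasDerivAt hxk1 hxk hlt (hφderiv _ hxk)
      rw [slope_def_field] at hslope
      have hd : 0 < x k - x (k + 1) := sub_pos.2 hlt
      rw [le_div_iff₀ hd] at hslope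
      have h1 : φ' (x k) * (x k - x (k + 1)) ≤ Δ k - Δ (k + 1) := hslope
      have hφ'nn : 0 ≤ φ' (x k) := (hφ'pos _ hxk).le
      nlinarith [mul_le_mul_of_nonneg_left h2 hφ'nn]
  -- per-step bound on a k
  have hak : ∀ k, k₁ ≤ k →
      a k ≤ (a (k - 1) + a (k - 2) + a (k - 3)) / 6
            + 3 * κ / (2 * σ₁) * (Δ k - Δ (k + 1)) := by
    intro k hk
    set b := a (k - 1) + a (k - 2) + a (k - 3) with hb_def
    set δ := Δ k - Δ (k + 1) with hδ_def
    have hbnn : 0 ≤ b := add_nonneg (add_nonneg (ha _) (ha _)) (ha _)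
    have hφ'nn : 0 ≤ φ' (x k) := (hφ'pos _ (hxmem k hk)).le
    have hδnn : 0 ≤ δ :=
      le_trans (mul_nonneg (mul_nonneg hσ₁.le (sq_nonneg _)) hφ'nn) (hstep k hk)
    have hkey : σ₁ * a k ^ 2 ≤ κ * b * δ := by
      have h1 : 1 ≤ κ * φ' (x k) * b := (hkl k hk).2
      have h2 : σ₁ * a k ^ 2 * φ' (x k) ≤ δ := hstep k hk
      nlinarith [mul_le_mul_of_nonneg_left h1 (mul_nonneg hσ₁.le (sq_nonneg (a k))),
        mul_le_mul_of_nonneg_left h2 (mul_nonneg hκ.le hbnn), sq_nonneg (a k)]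
    clear_value b δ
    have hc : 0 ≤ σ₁ * b / 6 + 3 * κ / 2 * δ :=
      add_nonneg (div_nonneg (mul_nonneg hσ₁.le hbnn) (by norm_num))
        (mul_nonneg (by linarith : (0:ℝ) ≤ 3 * κ / 2) hδnn)
    have e1 : (σ₁ * a k) ^ 2 = σ₁ * (σ₁ * a k ^ 2) := by ring
    have e2 : (σ₁ * b / 6 + 3 * κ / 2 * δ) ^ 2 - σ₁ * (κ * b * δ)
        = (σ₁ * b / 6 - 3 * κ / 2 * δ) ^ 2 := by ring
    have h2 : (σ₁ * a k) ^ 2 ≤ (σ₁ * b / 6 + 3 * κ / 2 * δ) ^ 2 := by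
      linarith [sq_nonneg (σ₁ * b / 6 - 3 * κ / 2 * δ),
        mul_le_mul_of_nonneg_left hkey hσ₁.le, e1, e2]
    have h3 : σ₁ * a k ≤ σ₁ * b / 6 + 3 * κ / 2 * δ :=
      (pow_le_pow_iff_left₀ (mul_nonneg hσ₁.le (ha k)) hc two_ne_zero).mp h2
    have h4 : σ₁ * a k ≤ σ₁ * (b / 6 + 3 * κ / (2 * σ₁) * δ) := by
      have : σ₁ * (b / 6 + 3 * κ / (2 * σ₁) * δ) = σ₁ * b / 6 + 3 * κ / 2 * δ := by
        field_simp
      linarith [this ▸ h3]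
    exact le_of_mul_le_mul_left h4 hσ₁
  -- telescoping
  have htel : ∀ N, k₁ ≤ N → ∑ k ∈ Finset.Ico k₁ N, (Δ k - Δ (k + 1)) = Δ k₁ - Δ N := by
    intro N hN
    rw [Finset.sum_Ico_eq_sum_range]
    have : ∀ m, Δ (k₁ + m) - Δ (k₁ + m + 1) = (fun i => Δ (k₁ + i)) m - (fun i => Δ (k₁ + i)) (m + 1) := by
      intro m; simp [Nat.add_assoc]
    simp_rw [this]
    rw [Finset.sum_range_sub' (fun i => Δ (k₁ + i))]
    simp [Nat.add_sub_cancel' hN]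
  -- shift bound
  have hshift : ∀ i, i ≤ 3 → ∀ N, ∑ k ∈ Finset.Ico k₁ N, a (k - i)
      ≤ ∑ j ∈ Finset.Ico (k₁ - 3) N, a j := by
    intro i hi N
    have hinj : Set.InjOn (· - i) (Finset.Ico k₁ N) := by
      intro p hp q hq hpq
      simp only [Finset.coe_Ico, Set.mem_Ico] at hp hq
      simp only at hpq
      omega
    rw [← Finset.sum_image hinj]
    apply Finset.sum_le_sum_of_subset_of_nonneg
    · intro j hj
      simp only [Finset.mem_image, Finset.mem_Ico] at hj ⊢
      obtain ⟨k, ⟨hk1, hk2⟩, rfl⟩ := hj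
      omega
    · intro j _ _; exact ha j
  set A : ℝ := ∑ j ∈ Finset.Ico (k₁ - 3) k₁, a j with hA_def
  have hAnn : 0 ≤ A := Finset.sum_nonneg fun j _ => ha j
  set D : ℝ := 3 * κ / (2 * σ₁) * Δ k₁ with hD_def
  have hDnn : 0 ≤ D :=
    mul_nonneg (div_nonneg (by linarith) (by linarith)) (hφpos _ (hxmem k₁ le_rfl)).le
  -- main partial sums bound
  have hmain : ∀ N, ∑ k ∈ Finset.range N, a k ≤ ∑ k ∈ Finset.range k₁, a k + A + 2 * D := by
    intro N
    rcases le_or_gt N k₁ with hN | hN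
    · have : ∑ k ∈ Finset.range N, a k ≤ ∑ k ∈ Finset.range k₁, a k := by
        apply Finset.sum_le_sum_of_subset_of_nonneg
        · exact Finset.range_subset_range.2 hN
        · intro j _ _; exact ha j
      linarith
    · have hN' : k₁ ≤ N := hN.le
      set S : ℝ := ∑ k ∈ Finset.Ico k₁ N, a k with hS_def
      have hsplit : ∑ k ∈ Finset.range N, a k = ∑ k ∈ Finset.range k₁, a k + S := by
        rw [hS_def, Finset.range_eq_Ico, Finset.range_eq_Ico]
        exact (Finset.sum_Ico_consecutive a (Nat.zero_le k₁) hN').symm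
      have hIcoA : ∑ j ∈ Finset.Ico (k₁ - 3) N, a j = A + S := by
        rw [hA_def, hS_def, ← Finset.sum_Ico_consecutive a (Nat.sub_le k₁ 3) hN']
      have hSb : S ≤ (A + S) / 2 + D := by
        have h1 : S ≤ ∑ k ∈ Finset.Ico k₁ N, ((a (k - 1) + a (k - 2) + a (k - 3)) / 6
            + 3 * κ / (2 * σ₁) * (Δ k - Δ (k + 1))) := by
          apply Finset.sum_le_sum
          intro k hk
          exact hak k (Finset.mem_Ico.1 hk).1
        rw [Finset.sum_add_distrib, ← Finset.mul_sum, htel N hN'] at h1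
        have h2 : ∑ k ∈ Finset.Ico k₁ N, (a (k - 1) + a (k - 2) + a (k - 3)) / 6
            ≤ 3 * (A + S) / 6 := by
          rw [← Finset.sum_div]
          have hsum : ∑ k ∈ Finset.Ico k₁ N, (a (k - 1) + a (k - 2) + a (k - 3))
              = ∑ k ∈ Finset.Ico k₁ N, a (k - 1) + ∑ k ∈ Finset.Ico k₁ N, a (k - 2)
                + ∑ k ∈ Finset.Ico k₁ N, a (k - 3) := by
            rw [← Finset.sum_add_distrib, ← Finset.sum_add_distrib]
          have b1 := hshift 1 (by norm_num) N
          have b2 := hshift 2 (by norm_num) N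
          have b3 := hshift 3 le_rfl N
          rw [hIcoA] at b1 b2 b3
          rw [hsum]
          linarith
        have h3 : 3 * κ / (2 * σ₁) * (Δ k₁ - Δ N) ≤ D := by
          have hΔN : 0 ≤ Δ N := (hφpos _ (hxmem N hN')).le
          have hcoef : 0 ≤ 3 * κ / (2 * σ₁) := by positivity
          rw [hD_def]
          nlinarith
        calc S ≤ ∑ k ∈ Finset.Ico k₁ N, (a (k - 1) + a (k - 2) + a (k - 3)) / 6
              + 3 * κ / (2 * σ₁) * (Δ k₁ - Δ N) := h1
          _ ≤ 3 * (A + S) / 6 + D := add_le_add h2 h3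
          _ = (A + S) / 2 + D := by ring
      have hS : S ≤ A + 2 * D := by linarith
      rw [hsplit]; linarith
  exact summable_of_sum_range_le ha hmain
end

section
/- (Kurdyka–Łojasiewicz finite-length argument, engine of Theorem III.8) Let (L_k)_{k≥0} be a nonincreasing real sequence converging to L* with L_k > L* for all k, let (a_k)_{k≥0} and (b_k)_{k≥0} be nonnegative reals, let σ₁ > 0, κ > 0, η > 0, and let φ : [0, η] → ℝ be continuous with φ(0) = 0, differentiable and concave on (0, η) with φ′ > 0 on (0, η). Assume: (i) σ₁(a_k² + b_k²) ≤ L_k − L_{k+1} for all k; and (ii) there exists k₁ ≥ 2 such that for all k ≥ k₁, L_k − L* < η and κ·φ′(L_k − L*)·(a_{k−1} + b_{k−1} + a_{k−2}) ≥ 1. Then ∑_{k=0}^∞ (a_k + b_k) < ∞. -/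
/-- Arithmetic core: combine descent, KL and AM–GM into the one-step bound. -/
private lemma kl_arith_aux (κ σ p s Δ t D : ℝ) (hκ : 0 < κ) (hσ : 0 < σ) (hp : 0 < p)
    (ht : 0 ≤ t) (hs : 0 ≤ s) (hΔ : 0 ≤ Δ) (hD : 0 ≤ D)
    (h1 : σ * p * D ≤ Δ) (h2 : 1 ≤ κ * p * s) (h3 : t ^ 2 ≤ 2 * D) :
    t ≤ s / 4 + (2 * κ / σ) * Δ := by
  have hA : σ * D ≤ κ * s * Δ := by
    have e1 := mul_le_mul_of_nonneg_left h1 (mul_nonneg hκ.le hs)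
    have e2 := mul_le_mul_of_nonneg_left h2 (mul_nonneg hσ.le hD)
    nlinarith
  have hv : 0 ≤ (2 * κ / σ) * Δ := by positivity
  have hD' : t ^ 2 ≤ s * ((2 * κ / σ) * Δ) := by
    rw [show s * ((2 * κ / σ) * Δ) = (2 * (κ * s * Δ)) / σ by ring, le_div_iff₀ hσ]
    nlinarith [mul_le_mul_of_nonneg_right h3 hσ.le]
  nlinarith [sq_nonneg (s / 4 - (2 * κ / σ) * Δ)]

theorem kl_finite_length_engine_III_8
    (L : ℕ → ℝ) (Lstar : ℝ) (hLmono : ∀ k, L (k + 1) ≤ L k)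
    (hLlim : Filter.Tendsto L Filter.atTop (nhds Lstar))
    (hLgt : ∀ k, Lstar < L k)
    (a b : ℕ → ℝ) (ha : ∀ k, 0 ≤ a k) (hb : ∀ k, 0 ≤ b k)
    (σ₁ κ η : ℝ) (hσ₁ : 0 < σ₁) (hκ : 0 < κ) (hη : 0 < η)
    (φ φ' : ℝ → ℝ)
    (hφcont : ContinuousOn φ (Set.Icc 0 η)) (hφ0 : φ 0 = 0)
    (hφderiv : ∀ t ∈ Set.Ioo (0 : ℝ) η, HasDerivAt φ (φ' t) t)
    (hφconc : ConcaveOn ℝ (Set.Ioo 0 η) φ)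
    (hφ'pos : ∀ t ∈ Set.Ioo (0 : ℝ) η, 0 < φ' t)
    (hdescent : ∀ k, σ₁ * (a k ^ 2 + b k ^ 2) ≤ L k - L (k + 1))
    (k₁ : ℕ) (hk₁ : 2 ≤ k₁)
    (hkl : ∀ k, k₁ ≤ k → L k - Lstar < η ∧
      1 ≤ κ * φ' (L k - Lstar) * (a (k - 1) + b (k - 1) + a (k - 2))) :
    Summable (fun k => a k + b k) := by
  have hepos : ∀ k, 0 < L k - Lstar := fun k => sub_pos.2 (hLgt k)
  have hemono : ∀ k, L (k + 1) - Lstar ≤ L k - Lstar := fun k => sub_le_sub_right (hLmono k) _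
  -- φ is strictly monotone, hence nonneg, on [0, η]
  have hφmono : StrictMonoOn φ (Set.Icc 0 η) := by
    apply strictMonoOn_of_deriv_pos (convex_Icc 0 η) hφcont
    intro t ht
    rw [interior_Icc] at ht
    rw [(hφderiv t ht).deriv]
    exact hφ'pos t ht
  have hφnonneg : ∀ t ∈ Set.Ioo (0:ℝ) η, 0 ≤ φ t := by
    intro t ht
    have := hφmono (Set.left_mem_Icc.2 hη.le) ⟨ht.1.le, ht.2.le⟩ ht.1
    rw [hφ0] at this; exact this.le
  -- key concavity inequality: tangent above the graph
  have hconcav : ∀ x ∈ Set.Ioo (0:ℝ) η, ∀ y ∈ Set.Ioo (0:ℝ) η, y ≤ x →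
      φ' x * (x - y) ≤ φ x - φ y := by
    intro x hx y hy hyx
    rcases eq_or_lt_of_le hyx with rfl | hlt
    · simp
    · have hslope := (hφconc.neg).slope_le_of_hasDerivAt hy hx hlt ((hφderiv x hx).neg)
      rw [slope_def_field] at hslope
      have hd : 0 < x - y := sub_pos.2 hlt
      have h2 := (div_le_iff₀ hd).1 hslope
      simp only [Pi.neg_apply] at h2
      nlinarith
  obtain ⟨j₀, rfl⟩ : ∃ j₀, k₁ = j₀ + 2 := ⟨k₁ - 2, by omega⟩
  set u : ℕ → ℝ := fun m => a (m + j₀) + b (m + j₀) with hu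
  have hunn : ∀ m, 0 ≤ u m := fun m => add_nonneg (ha _) (hb _)
  have hCpos : 0 < 2 * κ / σ₁ := by positivity
  -- one-step inequality
  have hstep : ∀ m, u (m + 2) ≤ (u (m + 1) + u m) / 4 +
      (2 * κ / σ₁) * (φ (L (m + 2 + j₀) - Lstar) - φ (L (m + 3 + j₀) - Lstar)) := by
    intro m
    have hk₁k : j₀ + 2 ≤ m + 2 + j₀ := by omega
    obtain ⟨hkη, hklk⟩ := hkl (m + 2 + j₀) hk₁k
    have hek : L (m + 2 + j₀) - Lstar ∈ Set.Ioo (0:ℝ) η := ⟨hepos _, hkη⟩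
    have hsucc : m + 2 + j₀ + 1 = m + 3 + j₀ := by omega
    have hek1 : L (m + 3 + j₀) - Lstar ∈ Set.Ioo (0:ℝ) η := by
      refine ⟨hepos _, lt_of_le_of_lt ?_ hkη⟩
      rw [← hsucc]; exact hemono _
    have hφ'k : 0 < φ' (L (m + 2 + j₀) - Lstar) := hφ'pos _ hek
    have hk1 : m + 2 + j₀ - 1 = m + 1 + j₀ := by omega
    have hk2 : m + 2 + j₀ - 2 = m + j₀ := by omega
    rw [hk1, hk2] at hklk
    -- concavity bound
    have hcb : φ' (L (m + 2 + j₀) - Lstar) *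
        ((L (m + 2 + j₀) - Lstar) - (L (m + 3 + j₀) - Lstar)) ≤
        φ (L (m + 2 + j₀) - Lstar) - φ (L (m + 3 + j₀) - Lstar) := by
      apply hconcav _ hek _ hek1
      rw [← hsucc]; exact hemono _
    -- descent
    have hdk : σ₁ * (a (m + 2 + j₀) ^ 2 + b (m + 2 + j₀) ^ 2) ≤
        (L (m + 2 + j₀) - Lstar) - (L (m + 3 + j₀) - Lstar) := by
      have := hdescent (m + 2 + j₀)
      rw [hsucc] at this
      linarith
    have hΔnn : 0 ≤ φ (L (m + 2 + j₀) - Lstar) - φ (L (m + 3 + j₀) - Lstar) := by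
      have hge : (L (m + 3 + j₀) - Lstar) ≤ (L (m + 2 + j₀) - Lstar) := by
        rw [← hsucc]; exact hemono _
      nlinarith [mul_nonneg hφ'k.le (sub_nonneg.2 hge)]
    have h1 : σ₁ * φ' (L (m + 2 + j₀) - Lstar) *
        (a (m + 2 + j₀) ^ 2 + b (m + 2 + j₀) ^ 2) ≤
        φ (L (m + 2 + j₀) - Lstar) - φ (L (m + 3 + j₀) - Lstar) := by
      have := mul_le_mul_of_nonneg_left hdk hφ'k.le
      nlinarith
    have hsnn : 0 ≤ a (m + 1 + j₀) + b (m + 1 + j₀) + a (m + j₀) :=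
      add_nonneg (add_nonneg (ha _) (hb _)) (ha _)
    have hDnn : 0 ≤ a (m + 2 + j₀) ^ 2 + b (m + 2 + j₀) ^ 2 := by positivity
    have htnn : 0 ≤ a (m + 2 + j₀) + b (m + 2 + j₀) := add_nonneg (ha _) (hb _)
    have h3 : (a (m + 2 + j₀) + b (m + 2 + j₀)) ^ 2 ≤
        2 * (a (m + 2 + j₀) ^ 2 + b (m + 2 + j₀) ^ 2) := by
      nlinarith [sq_nonneg (a (m + 2 + j₀) - b (m + 2 + j₀))]
    have hmain := kl_arith_aux κ σ₁ (φ' (L (m + 2 + j₀) - Lstar))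
      (a (m + 1 + j₀) + b (m + 1 + j₀) + a (m + j₀))
      (φ (L (m + 2 + j₀) - Lstar) - φ (L (m + 3 + j₀) - Lstar))
      (a (m + 2 + j₀) + b (m + 2 + j₀))
      (a (m + 2 + j₀) ^ 2 + b (m + 2 + j₀) ^ 2)
      hκ hσ₁ hφ'k htnn hsnn hΔnn hDnn h1 hklk h3
    have hub : ∀ n, u n = a (n + j₀) + b (n + j₀) := fun n => rfl
    rw [hub, hub, hub]
    have hr2 : m + 2 + j₀ = m + 2 + j₀ := rfl
    have hble : a (m + 1 + j₀) + b (m + 1 + j₀) + a (m + j₀) ≤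
        (a (m + 1 + j₀) + b (m + 1 + j₀)) + (a (m + j₀) + b (m + j₀)) := by
      linarith [hb (m + j₀)]
    calc a (m + 2 + j₀) + b (m + 2 + j₀)
        ≤ (a (m + 1 + j₀) + b (m + 1 + j₀) + a (m + j₀)) / 4 +
          (2 * κ / σ₁) * (φ (L (m + 2 + j₀) - Lstar) - φ (L (m + 3 + j₀) - Lstar)) := hmain
      _ ≤ _ := by linarith
  clear_value u
  -- nonnegativity of the tail values of φ
  have hψnn : ∀ n, 0 ≤ φ (L (n + 2 + j₀) - Lstar) := by
    intro n
    have h := hkl (n + 2 + j₀) (by omega)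
    exact hφnonneg _ ⟨hepos _, h.1⟩
  -- bounded partial sums
  have hSmono : Monotone (fun n => ∑ m ∈ Finset.range n, u m) :=
    monotone_nat_of_le_succ (by
      intro n
      rw [Finset.sum_range_succ]
      linarith [hunn n])
  set M : ℝ := 2 * (u 0 + u 1) + 2 * ((2 * κ / σ₁) * φ (L (2 + j₀) - Lstar)) with hM
  have hSbound : ∀ n, ∑ m ∈ Finset.range n, u m ≤ M := by
    have key : ∀ n, ∑ m ∈ Finset.range (n + 2), u m ≤ M := by
      intro n
      have htel : ∑ m ∈ Finset.range n,
          (φ (L (m + 2 + j₀) - Lstar) - φ (L (m + 3 + j₀) - Lstar))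
          = φ (L (0 + 2 + j₀) - Lstar) - φ (L (n + 2 + j₀) - Lstar) := by
        have h := Finset.sum_range_sub' (fun m => φ (L (m + 2 + j₀) - Lstar)) n
        simpa using h
      have hsum : ∑ m ∈ Finset.range n, u (m + 2) ≤
          (∑ m ∈ Finset.range n, u (m + 1)) / 4 + (∑ m ∈ Finset.range n, u m) / 4 +
          (2 * κ / σ₁) * (φ (L (0 + 2 + j₀) - Lstar) - φ (L (n + 2 + j₀) - Lstar)) := by
        calc ∑ m ∈ Finset.range n, u (m + 2)
            ≤ ∑ m ∈ Finset.range n, ((u (m + 1) + u m) / 4 +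
              (2 * κ / σ₁) * (φ (L (m + 2 + j₀) - Lstar) - φ (L (m + 3 + j₀) - Lstar))) :=
              Finset.sum_le_sum (fun m _ => hstep m)
          _ = _ := by
              rw [Finset.sum_add_distrib, ← Finset.mul_sum, htel, ← Finset.sum_div,
                Finset.sum_add_distrib]
              ring
      have hshift2 : ∑ m ∈ Finset.range n, u (m + 2)
          = (∑ m ∈ Finset.range (n + 2), u m) - u 0 - u 1 := by
        have e1 := Finset.sum_range_succ' u (n + 1)
        have e2 := Finset.sum_range_succ' (fun m => u (m + 1)) n
        rw [e1, e2]; ring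
      have hshift1 : ∑ m ∈ Finset.range n, u (m + 1)
          = (∑ m ∈ Finset.range (n + 1), u m) - u 0 := by
        have := Finset.sum_range_succ' u n
        rw [this]; ring
      have hS1le : ∑ m ∈ Finset.range (n + 1), u m ≤ ∑ m ∈ Finset.range (n + 2), u m :=
        hSmono (by omega)
      have hS0le : ∑ m ∈ Finset.range n, u m ≤ ∑ m ∈ Finset.range (n + 2), u m :=
        hSmono (by omega)
      have hφtail : 0 ≤ φ (L (n + 2 + j₀) - Lstar) := hψnn n
      have hφhead : 0 ≤ φ (L (0 + 2 + j₀) - Lstar) := hψnn 0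
      have hCtail : 0 ≤ (2 * κ / σ₁) * φ (L (n + 2 + j₀) - Lstar) :=
        mul_nonneg hCpos.le hφtail
      have hmulexp : (2 * κ / σ₁) * (φ (L (0 + 2 + j₀) - Lstar) - φ (L (n + 2 + j₀) - Lstar))
          = (2 * κ / σ₁) * φ (L (0 + 2 + j₀) - Lstar)
            - (2 * κ / σ₁) * φ (L (n + 2 + j₀) - Lstar) := by ring
      rw [hshift2, hshift1, hmulexp] at hsum
      have hu0 := hunn 0
      have hu1 := hunn 1
      have h02 : (0:ℕ) + 2 + j₀ = 2 + j₀ := by omega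
      rw [h02] at hsum
      rw [hM]
      nlinarith [hsum, hS1le, hS0le, hCtail, hu0, hu1]
    intro n
    calc ∑ m ∈ Finset.range n, u m ≤ ∑ m ∈ Finset.range (n + 2), u m := hSmono (by omega)
      _ ≤ M := key n
  have hsumu : Summable u := summable_of_sum_range_le hunn hSbound
  rw [hu] at hsumu
  exact (summable_nat_add_iff j₀).1 hsumu
end
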